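/- arXiv:1504.08341 — 7 statements merged into one kernel-verified Lean document; each statement's English description precedes it below -/
import Mathlib

section
/- Let l, n ≥ 1 and let σ₁, …, σ_{(n+2)(n+1)^{l−1}} be distinct elements of {0,1}^n. Then there exist an index i ∈ {1,…,n} and indices 1 ≤ k₁ < k₂ < ⋯ < k_{2^l} ≤ (n+2)(n+1)^{l−1} such that σ_{k_j}(i) = 0 for all odd j and σ_{k_j}(i) = 1 for all even j. -/
private lemma zz_base (n m : ℕ) (hm : n + 2 ≤ m) (σ : Fin m → Fin n → Fin 2)
    (hσ : Function.Injective σ) :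
    ∃ i : Fin n, ∃ a b : Fin m, a < b ∧ σ a i = 0 ∧ σ b i = 1 := by
  by_contra h
  push_neg at h
  have f2a : ∀ x : Fin 2, x ≠ 1 → x = 0 := by decide
  have f2b : ∀ x : Fin 2, x ≠ 0 → x = 1 := by decide
  have hle : ∀ a b : Fin m, a < b → ∀ i, (σ b i : ℕ) ≤ (σ a i : ℕ) := by
    intro a b hab i
    by_cases h0 : σ a i = 0
    · have h1 := f2a _ (h i a b hab h0)
      simp [h1]
    · have h1 := f2b _ h0
      have := (σ b i).isLt
      simp [h1]
      omega
  set f : Fin m → ℕ := fun a => ∑ i, (σ a i : ℕ) with hf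
  have hanti : StrictAnti f := by
    intro a b hab
    have hne : σ a ≠ σ b := fun hc => absurd (hσ hc) (ne_of_lt hab)
    obtain ⟨i, hi⟩ : ∃ i, σ a i ≠ σ b i := by
      by_contra hc
      push_neg at hc
      exact hne (funext hc)
    apply Finset.sum_lt_sum (fun i _ => hle a b hab i)
    refine ⟨i, Finset.mem_univ i, lt_of_le_of_ne (hle a b hab i) ?_⟩
    intro hc
    exact hi (Fin.val_injective hc).symm
  have hbd : ∀ a, f a < n + 1 := by
    intro a
    have : f a ≤ ∑ _i : Fin n, 1 := Finset.sum_le_sum (fun i _ => by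
      have := (σ a i).isLt; omega)
    simpa using Nat.lt_succ_of_le (le_trans this (by simp))
  have hinj : Function.Injective (fun a : Fin m => (⟨f a, hbd a⟩ : Fin (n + 1))) := by
    intro a b hab
    exact hanti.injective (by simpa using congrArg Fin.val hab)
  have := Fintype.card_le_of_injective _ hinj
  simp at this
  omega

private lemma zz_key (n : ℕ) (hn : 1 ≤ n) :
    ∀ l (σ : Fin ((n + 2) * (n + 1) ^ l) → Fin n → Fin 2), Function.Injective σ →
      ∃ i : Fin n, ∃ k : Fin (2 ^ (l + 1)) → Fin ((n + 2) * (n + 1) ^ l),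
        StrictMono k ∧ ∀ j, σ (k j) i = if Even (j : ℕ) then 0 else 1 := by
  intro l
  induction l with
  | zero =>
    intro σ hσ
    obtain ⟨i, a, b, hab, ha, hb⟩ := zz_base n _ (by norm_num) σ hσ
    refine ⟨i, fun j => if (j : ℕ) = 0 then a else b, ?_, ?_⟩
    · intro j1 j2 hj
      have h1 := j1.isLt
      have h2 := j2.isLt
      have hj' : (j1 : ℕ) < (j2 : ℕ) := hj
      norm_num at h1 h2
      have e1 : (j1 : ℕ) = 0 := by omega
      have e2 : (j2 : ℕ) = 1 := by omega
      simpa [e1, e2] using hab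
    · intro j
      have h2 := j.isLt
      norm_num at h2
      have h3 : (j : ℕ) = 0 ∨ (j : ℕ) = 1 := by omega
      rcases h3 with e | e <;> simp [e, ha, hb]
  | succ l IH =>
    intro σ hσ
    set M := (n + 2) * (n + 1) ^ l with hM
    have hMpos : 0 < M := by positivity
    have hN : (n + 2) * (n + 1) ^ (l + 1) = M * (n + 1) := by
      rw [hM, pow_succ]; ring
    -- block embedding
    have hemb : ∀ (b : Fin (n + 1)) (t : Fin M),
        (b : ℕ) * M + (t : ℕ) < (n + 2) * (n + 1) ^ (l + 1) := by
      intro b t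
      have hb := b.isLt
      have ht := t.isLt
      rw [hN]
      calc (b : ℕ) * M + (t : ℕ) < ((b : ℕ) + 1) * M := by
            rw [add_mul, one_mul]; omega
        _ ≤ (n + 1) * M := Nat.mul_le_mul_right M (by omega)
        _ = M * (n + 1) := Nat.mul_comm _ _
    set τ : Fin (n + 1) → Fin M → Fin n → Fin 2 :=
      fun b t => σ ⟨(b : ℕ) * M + (t : ℕ), hemb b t⟩ with hτ
    have hτinj : ∀ b, Function.Injective (τ b) := by
      intro b t1 t2 h
      have := hσ h
      have := Fin.val_eq_of_eq this
      simp at this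
      exact Fin.val_injective (by omega)
    have H : ∀ b, ∃ i : Fin n, ∃ k : Fin (2 ^ (l + 1)) → Fin M,
        StrictMono k ∧ ∀ j, τ b (k j) i = if Even (j : ℕ) then 0 else 1 :=
      fun b => IH (τ b) (hτinj b)
    choose I K hK1 hK2 using H
    -- pigeonhole on coordinates
    obtain ⟨b1, b2, hne, hIeq⟩ :
        ∃ b1 b2 : Fin (n + 1), b1 ≠ b2 ∧ I b1 = I b2 := by
      have := Fintype.exists_ne_map_eq_of_card_lt I (by simp)
      obtain ⟨b1, b2, h1, h2⟩ := this
      exact ⟨b1, b2, h1, h2⟩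
    wlog hlt : b1 < b2 generalizing b1 b2
    · exact this b2 b1 hne.symm hIeq.symm (lt_of_le_of_ne (not_lt.mp hlt) hne.symm)
    have hP : 2 ^ (l + 1 + 1) = 2 ^ (l + 1) + 2 ^ (l + 1) := by ring
    refine ⟨I b1, fun j =>
      if h : (j : ℕ) < 2 ^ (l + 1) then
        ⟨(b1 : ℕ) * M + (K b1 ⟨j, h⟩ : ℕ), hemb b1 _⟩
      else
        ⟨(b2 : ℕ) * M + (K b2 ⟨(j : ℕ) - 2 ^ (l + 1), by
            have := j.isLt; omega⟩ : ℕ), hemb b2 _⟩, ?_, ?_⟩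
    · intro j1 j2 hj
      have hj' : (j1 : ℕ) < (j2 : ℕ) := hj
      by_cases h1 : (j1 : ℕ) < 2 ^ (l + 1) <;> by_cases h2 : (j2 : ℕ) < 2 ^ (l + 1)
      · simp only [dif_pos h1, dif_pos h2]
        have := hK1 b1 (show (⟨(j1:ℕ), h1⟩ : Fin (2^(l+1))) < ⟨(j2:ℕ), h2⟩ from hj')
        simp only [Fin.lt_def]
        omega
      · simp only [dif_pos h1, dif_neg h2]
        simp only [Fin.lt_def]
        have hx := (K b1 ⟨(j1:ℕ), h1⟩).isLt
        have hmul : ((b1 : ℕ) + 1) * M ≤ (b2 : ℕ) * M :=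
          Nat.mul_le_mul_right M (by omega)
        have : (b1 : ℕ) * M + M ≤ (b2 : ℕ) * M := by
          rw [add_mul, one_mul] at hmul; omega
        omega
      · omega
      · simp only [dif_neg h1, dif_neg h2]
        have := hK1 b2 (show (⟨(j1:ℕ) - 2^(l+1), by have := j1.isLt; omega⟩ : Fin (2^(l+1)))
          < ⟨(j2:ℕ) - 2^(l+1), by have := j2.isLt; omega⟩ from by
            simp only [Fin.lt_def]; omega)
        simp only [Fin.lt_def]
        omega
    · intro j
      by_cases h : (j : ℕ) < 2 ^ (l + 1)
      · simp only [dif_pos h]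
        have := hK2 b1 ⟨(j : ℕ), h⟩
        simpa using this
      · simp only [dif_neg h]
        have hval := hK2 b2 ⟨(j : ℕ) - 2 ^ (l + 1), by have := j.isLt; omega⟩
        rw [hIeq]
        have heven : Even ((j : ℕ) - 2 ^ (l + 1)) ↔ Even (j : ℕ) := by
          rw [Nat.even_sub (not_lt.mp h)]
          simp [Nat.even_pow]
        by_cases he : Even ((j : ℕ))
        · have h2 := heven.mpr he
          simpa [he, h2] using hval
        · have h2 : ¬ Even ((j : ℕ) - 2 ^ (l + 1)) := fun hc => he (heven.mp hc)
          simpa [he, h2] using hval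

/-- Zigzag combinatorial lemma: given `(n+2)(n+1)^(l-1)` distinct elements of
`{0,1}^n`, there are a coordinate `i` and `2^l` increasing indices along which the
`i`-th coordinate alternates, starting with `0`.  (Indices `j` here are 0-based, so
`j` even corresponds to odd position `j+1` in the 1-based statement.) -/
theorem zigzag_combinatorial (l n : ℕ) (hl : 1 ≤ l) (hn : 1 ≤ n)
    (σ : Fin ((n + 2) * (n + 1) ^ (l - 1)) → Fin n → Fin 2)
    (hσ : Function.Injective σ) :
    ∃ i : Fin n, ∃ k : Fin (2 ^ l) → Fin ((n + 2) * (n + 1) ^ (l - 1)),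
      StrictMono k ∧
        ∀ j : Fin (2 ^ l), σ (k j) i = if Even (j : ℕ) then 0 else 1 := by
  obtain ⟨m, rfl⟩ : ∃ m, l = m + 1 := ⟨l - 1, (Nat.succ_pred_eq_of_pos hl).symm⟩
  exact zz_key n hn m σ hσ
end

section
/- Let X be a compact metric space, f : X → X a continuous map, and 𝒜 a collection of subsets of X having an independence set with positive density. Then for every n ∈ ℕ there is a finite set F ⊆ ℕ with |F| = n such that the collection 𝒜_F = { ⋂_{i ∈ F} f^{−i}(Y_i) : (Y_i)_{i∈F} ∈ 𝒜^F } also has an independence set with positive density. -/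
open scoped Classical

/-- The lower density of a set of natural numbers. -/
noncomputable def lowerDensity (A : Set ℕ) : ℝ :=
  Filter.atTop.liminf fun n : ℕ =>
    (((Finset.Icc 1 n).filter (fun m => m ∈ A)).card : ℝ) / n

/-- `I` is an independence set for the collection `𝒜` with respect to `f`:
for every finite `J ⊆ I` and every choice `Y_j ∈ 𝒜` (`j ∈ J`), the
intersection `⋂_{j∈J} f^{-j}(Y_j)` is nonempty. -/
def IsIndepSet {X : Type*} (f : X → X) (𝒜 : Set (Set X)) (I : Set ℕ) : Prop :=
  ∀ J : Finset ℕ, (J : Set ℕ) ⊆ I → ∀ Y : ℕ → Set X, (∀ j ∈ J, Y j ∈ 𝒜) →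
    (⋂ j ∈ J, f^[j] ⁻¹' Y j).Nonempty

section AuxEnlarge

open Filter Finset

lemma cnt_le (A : Set ℕ) (N : ℕ) : ((Finset.Icc 1 N).filter (fun m => m ∈ A)).card ≤ N := by
  calc ((Finset.Icc 1 N).filter (fun m => m ∈ A)).card ≤ (Finset.Icc 1 N).card :=
        Finset.card_filter_le _ _
    _ = N := by simp

lemma u_bdd (A : Set ℕ) : IsBoundedUnder (· ≤ ·) atTop
    (fun n : ℕ => (((Finset.Icc 1 n).filter (fun m => m ∈ A)).card : ℝ) / n) := by
  refine isBoundedUnder_of ⟨1, fun n => ?_⟩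
  rcases Nat.eq_zero_or_pos n with h | h
  · simp [h]
  · rw [div_le_one (by exact_mod_cast h)]
    exact_mod_cast cnt_le A n

lemma u_nonneg (A : Set ℕ) : IsBoundedUnder (· ≥ ·) atTop
    (fun n : ℕ => (((Finset.Icc 1 n).filter (fun m => m ∈ A)).card : ℝ) / n) :=
  isBoundedUnder_of ⟨0, fun n => by positivity⟩

lemma lowerDensity_pos_of_range (A : Set ℕ) (a : ℝ) (ha : 0 < a)
    (h : ∀ᶠ N in atTop, a * N ≤ (((Finset.range N).filter (fun m => m ∈ A)).card : ℝ)) :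
    0 < lowerDensity A := by
  have key : ∀ᶠ N in atTop, a / 2 ≤
      (((Finset.Icc 1 N).filter (fun m => m ∈ A)).card : ℝ) / N := by
    filter_upwards [h, Filter.eventually_ge_atTop (⌈2 / a⌉₊ + 1)] with N hN hN2
    have hNR : (2 : ℝ) / a ≤ N := by
      have := Nat.ceil_le.mp (Nat.le_of_succ_le hN2)
      exact this
    have hN1 : (1:ℕ) ≤ N := le_trans (Nat.le_add_left 1 _) hN2
    have hNpos : (0:ℝ) < N := by exact_mod_cast hN1
    -- card over Icc 1 N ≥ card over range N - 1
    have hsub : ((Finset.range N).filter (fun m => m ∈ A)) ⊆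
        insert 0 ((Finset.Icc 1 N).filter (fun m => m ∈ A)) := by
      intro x hx
      simp only [Finset.mem_filter, Finset.mem_range] at hx
      rcases Nat.eq_zero_or_pos x with h0 | h0
      · simp [h0]
      · exact Finset.mem_insert_of_mem (by
          simp only [Finset.mem_filter, Finset.mem_Icc]
          exact ⟨⟨h0, le_of_lt hx.1⟩, hx.2⟩)
    have hcard : (((Finset.range N).filter (fun m => m ∈ A)).card : ℝ) ≤
        (((Finset.Icc 1 N).filter (fun m => m ∈ A)).card : ℝ) + 1 := by
      have := (Finset.card_le_card hsub).trans (Finset.card_insert_le _ _)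
      exact_mod_cast this
    rw [le_div_iff₀ hNpos]
    have h1 : (1:ℝ) ≤ a / 2 * N := by
      rw [div_mul_eq_mul_div, le_div_iff₀ (by norm_num : (0:ℝ) < 2)]
      calc (1:ℝ) * 2 = 2 := by ring
        _ = (2 / a) * a := by field_simp
        _ ≤ a * N := by nlinarith
    nlinarith [hN, hcard]
  have : a / 2 ≤ lowerDensity A :=
    Filter.le_liminf_of_le ((u_bdd A).isCoboundedUnder_ge) key
  linarith

lemma exists_c_of_lowerDensity_pos (I : Set ℕ) (h : 0 < lowerDensity I) :
    ∃ c : ℝ, 0 < c ∧ ∀ᶠ N in atTop,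
      c * N ≤ (((Finset.Icc 1 N).filter (fun m => m ∈ I)).card : ℝ) := by
  refine ⟨lowerDensity I / 2, by linarith, ?_⟩
  have hlt : lowerDensity I / 2 < lowerDensity I := by linarith
  have hev : ∀ᶠ N in atTop, lowerDensity I / 2 <
      (((Finset.Icc 1 N).filter (fun m => m ∈ I)).card : ℝ) / N :=
    Filter.eventually_lt_of_lt_liminf hlt (u_nonneg I)
  filter_upwards [hev, Filter.eventually_ge_atTop 1] with N hN hN1
  have hNpos : (0:ℝ) < N := by exact_mod_cast hN1
  rw [lt_div_iff₀ hNpos] at hN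
  linarith
open scoped Classical
open Filter Finset

/-- number of `t < K` with `x + t ∈ I` -/
noncomputable def cK (I : Set ℕ) (K x : ℕ) : ℕ :=
  ((Finset.range K).filter (fun t => x + t ∈ I)).card

lemma sum_cK (I : Set ℕ) (K N : ℕ) :
    ∑ x ∈ Finset.Icc 1 N, cK I K x =
      ∑ t ∈ Finset.range K, ((Finset.Icc 1 N).filter (fun x => x + t ∈ I)).card := by
  simp only [cK, Finset.card_filter]
  exact Finset.sum_comm

lemma cnt_le_shift (I : Set ℕ) (N t : ℕ) :
    ((Finset.Icc 1 N).filter (fun m => m ∈ I)).card ≤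
      t + ((Finset.Icc 1 N).filter (fun x => x + t ∈ I)).card := by
  have hsub : (Finset.Icc 1 N).filter (fun m => m ∈ I) ⊆
      (Finset.Icc 1 t) ∪ ((Finset.Icc 1 N).filter (fun x => x + t ∈ I)).image (· + t) := by
    intro y hy
    simp only [Finset.mem_filter, Finset.mem_Icc] at hy
    rcases le_or_gt y t with h | h
    · exact Finset.mem_union_left _ (Finset.mem_Icc.mpr ⟨hy.1.1, h⟩)
    · refine Finset.mem_union_right _ ?_
      refine Finset.mem_image.mpr ⟨y - t, ?_, Nat.sub_add_cancel h.le⟩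
      simp only [Finset.mem_filter, Finset.mem_Icc]
      refine ⟨⟨Nat.le_sub_of_add_le (by omega), Nat.sub_le_of_le_add (by omega)⟩, ?_⟩
      rw [Nat.sub_add_cancel h.le]; exact hy.2
  calc ((Finset.Icc 1 N).filter (fun m => m ∈ I)).card
      ≤ _ := Finset.card_le_card hsub
    _ ≤ (Finset.Icc 1 t).card + (((Finset.Icc 1 N).filter (fun x => x + t ∈ I)).image (· + t)).card :=
        Finset.card_union_le _ _
    _ ≤ t + ((Finset.Icc 1 N).filter (fun x => x + t ∈ I)).card := by
        exact add_le_add (le_of_eq (by simp)) Finset.card_image_le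

lemma step_A (I : Set ℕ) (K N : ℕ) :
    K * ((Finset.Icc 1 N).filter (fun m => m ∈ I)).card ≤
      K * K + ∑ x ∈ Finset.Icc 1 N, cK I K x := by
  rw [sum_cK]
  calc K * ((Finset.Icc 1 N).filter (fun m => m ∈ I)).card
      = ∑ _t ∈ Finset.range K, ((Finset.Icc 1 N).filter (fun m => m ∈ I)).card := by
        rw [Finset.sum_const, Finset.card_range, smul_eq_mul]
    _ ≤ ∑ t ∈ Finset.range K, (K + ((Finset.Icc 1 N).filter (fun x => x + t ∈ I)).card) := by
        refine Finset.sum_le_sum fun t ht => ?_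
        have := cnt_le_shift I N t
        have ht' : t ≤ K := (Finset.mem_range.mp ht).le
        omega
    _ = K * K + _ := by rw [Finset.sum_add_distrib, Finset.sum_const, Finset.card_range, smul_eq_mul]

lemma step_B (I : Set ℕ) (n K N : ℕ) :
    ∑ x ∈ Finset.Icc 1 N, cK I K x ≤
      K * ((Finset.Icc 1 N).filter (fun x => n ≤ cK I K x)).card + n * N := by
  rw [← Finset.sum_filter_add_sum_filter_not (Finset.Icc 1 N) (fun x => n ≤ cK I K x)]
  gcongr
  · calc ∑ x ∈ (Finset.Icc 1 N).filter (fun x => n ≤ cK I K x), cK I K x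
        ≤ ∑ _x ∈ (Finset.Icc 1 N).filter (fun x => n ≤ cK I K x), K :=
          Finset.sum_le_sum fun x _ => (Finset.card_filter_le _ _).trans (by simp [cK])
      _ = _ := by rw [Finset.sum_const, smul_eq_mul, mul_comm]
  · calc ∑ x ∈ (Finset.Icc 1 N).filter (fun x => ¬ n ≤ cK I K x), cK I K x
        ≤ ∑ _x ∈ (Finset.Icc 1 N).filter (fun x => ¬ n ≤ cK I K x), n :=
          Finset.sum_le_sum fun x hx => by
            simp only [Finset.mem_filter, not_le] at hx; exact hx.2.le
      _ ≤ n * N := by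
          rw [Finset.sum_const, smul_eq_mul, mul_comm]
          gcongr
          exact (Finset.card_filter_le _ _).trans (by simp)

lemma Dcard_bound (I : Set ℕ) (n K : ℕ) (c : ℝ) (hc : 0 < c) (hK1 : 1 ≤ K)
    (hKn : (n : ℝ) ≤ c / 2 * K) (D : Set ℕ) (hDc : ∀ x, x ∈ D ↔ n ≤ cK I K x)
    (h : ∀ᶠ N in atTop, c * N ≤ (((Finset.Icc 1 N).filter (fun m => m ∈ I)).card : ℝ)) :
    ∀ᶠ N in atTop, c / 4 * N ≤
      (((Finset.Icc 1 N).filter (fun x => x ∈ D)).card : ℝ) := by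
  filter_upwards [h, Filter.eventually_ge_atTop (⌈(4 * K) / c⌉₊ + 1)] with N hN hN2
  have eD : (Finset.Icc 1 N).filter (fun x => x ∈ D) =
      (Finset.Icc 1 N).filter (fun x => n ≤ cK I K x) :=
    Finset.filter_congr fun x _ => by rw [hDc]
  rw [eD]
  have hNc : (4 * K : ℝ) / c ≤ N := le_trans (Nat.le_ceil _) (by exact_mod_cast Nat.le_of_succ_le hN2)
  have hA := step_A I K N
  have hB := step_B I n K N
  have hKpos : (0:ℝ) < K := by exact_mod_cast hK1
  have hNpos : (0:ℝ) ≤ N := by positivity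
  -- cast to ℝ
  have hA' : (K:ℝ) * (((Finset.Icc 1 N).filter (fun m => m ∈ I)).card : ℝ) ≤
      K * K + (∑ x ∈ Finset.Icc 1 N, cK I K x : ℕ) := by exact_mod_cast hA
  have hB' : ((∑ x ∈ Finset.Icc 1 N, cK I K x : ℕ) : ℝ) ≤
      K * (((Finset.Icc 1 N).filter (fun x => n ≤ cK I K x)).card : ℝ) + n * N := by
    exact_mod_cast hB
  have hKN : (K:ℝ) * (c * N) ≤ K * K + K * (((Finset.Icc 1 N).filter (fun x => n ≤ cK I K x)).card) + n * N := by
    nlinarith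
  have hnN : (n:ℝ) * N ≤ c / 2 * K * N := by nlinarith
  have hKK : (K:ℝ) * K ≤ c / 4 * K * N := by
    have : (K:ℝ) ≤ c / 4 * N := by
      rw [div_le_iff₀ hc] at hNc
      nlinarith
    nlinarith
  nlinarith

/-- count over window `{b+1, ..., b+x}`, reindexed from 0. -/
noncomputable def w (E : Set ℕ) (b x : ℕ) : ℕ :=
  ((Finset.range x).filter (fun i => b + 1 + i ∈ E)).card

lemma partition_windows (D : Set ℕ) (L M : ℕ) (hL : 1 ≤ L) :
    ((Finset.Icc 1 (L * M)).filter (fun x => x ∈ D)).card ≤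
      ∑ q ∈ Finset.range M, w D (q * L) L := by
  have hsub : ∀ x ∈ (Finset.Icc 1 (L * M)).filter (fun x => x ∈ D),
      x ∈ (Finset.range M).biUnion (fun q =>
        ((Finset.range L).filter (fun i => q * L + 1 + i ∈ D)).image (fun i => q * L + 1 + i)) := by
    intro x hx
    simp only [Finset.mem_filter, Finset.mem_Icc] at hx
    obtain ⟨⟨hx1, hx2⟩, hxD⟩ := hx
    have hdm := Nat.div_add_mod (x - 1) L
    have hmod : (x - 1) % L < L := Nat.mod_lt _ (by omega)
    have hcomm : (x - 1) / L * L = L * ((x - 1) / L) := Nat.mul_comm _ _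
    refine Finset.mem_biUnion.mpr ⟨(x - 1) / L, ?_, ?_⟩
    · rw [Finset.mem_range]
      exact Nat.div_lt_of_lt_mul (by omega)
    · refine Finset.mem_image.mpr ⟨(x - 1) % L, ?_, by omega⟩
      simp only [Finset.mem_filter, Finset.mem_range]
      refine ⟨hmod, ?_⟩
      have hx' : (x - 1) / L * L + 1 + (x - 1) % L = x := by omega
      rw [hx']; exact hxD
  calc ((Finset.Icc 1 (L * M)).filter (fun x => x ∈ D)).card
      ≤ _ := Finset.card_le_card hsub
    _ ≤ ∑ q ∈ Finset.range M, (((Finset.range L).filter (fun i => q * L + 1 + i ∈ D)).image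
          (fun i => q * L + 1 + i)).card := Finset.card_biUnion_le
    _ ≤ ∑ q ∈ Finset.range M, w D (q * L) L := by
        refine Finset.sum_le_sum fun q _ => ?_
        refine Finset.card_image_le.trans ?_
        unfold w
        exact le_of_eq (congrArg Finset.card (Finset.filter_congr fun i _ => Iff.rfl))

lemma window_exists (D : Set ℕ) (c2 : ℝ) (hc2 : 0 < c2)
    (hD : ∀ᶠ N : ℕ in atTop, c2 * N ≤ (((Finset.Icc 1 N).filter (fun x => x ∈ D)).card : ℝ)) :
    ∀ L : ℕ, 1 ≤ L → ∃ a, c2 / 2 * L ≤ (w D a L : ℝ) := by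
  intro L hL
  obtain ⟨N0, hN0⟩ := Filter.eventually_atTop.mp hD
  by_contra hcon
  push_neg at hcon
  set M := N0 + 1 with hM
  have hLM : N0 ≤ L * M := by
    calc N0 ≤ M := by omega
      _ = 1 * M := (one_mul M).symm
      _ ≤ L * M := by gcongr
  have h1 : c2 * (L * M : ℕ) ≤ (((Finset.Icc 1 (L * M)).filter (fun x => x ∈ D)).card : ℝ) :=
    hN0 (L * M) hLM
  have h2 : (((Finset.Icc 1 (L * M)).filter (fun x => x ∈ D)).card : ℝ) ≤
      ∑ q ∈ Finset.range M, (w D (q * L) L : ℝ) := by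
    exact_mod_cast partition_windows D L M hL
  have h3 : ∑ q ∈ Finset.range M, (w D (q * L) L : ℝ) ≤ M * (c2 / 2 * L) := by
    calc ∑ q ∈ Finset.range M, (w D (q * L) L : ℝ)
        ≤ ∑ _q ∈ Finset.range M, (c2 / 2 * L) :=
          Finset.sum_le_sum fun q _ => (hcon (q * L)).le
      _ = M * (c2 / 2 * L) := by rw [Finset.sum_const, Finset.card_range, nsmul_eq_mul]
  have hLpos : (0:ℝ) < L := by exact_mod_cast hL
  have hMpos : (0:ℝ) < M := by positivity
  have hcast : ((L * M : ℕ) : ℝ) = (L : ℝ) * M := by push_cast; ring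
  rw [hcast] at h1
  nlinarith [mul_pos (half_pos hc2) (mul_pos hLpos hMpos)]

def colorSet (I : Set ℕ) (F : Finset ℕ) : Set ℕ := {x | ∀ t ∈ F, x + t ∈ I}

lemma mem_colorSet {I : Set ℕ} {F : Finset ℕ} {x : ℕ} :
    x ∈ colorSet I F ↔ ∀ t ∈ F, x + t ∈ I := Iff.rfl

lemma exists_color_window (I : Set ℕ) (n K : ℕ) (hnK : n ≤ K) (c2 : ℝ) (hc2 : 0 < c2)
    (D : Set ℕ) (hDc : ∀ x, x ∈ D ↔ n ≤ cK I K x)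
    (hD : ∀ᶠ N : ℕ in atTop, c2 * N ≤
      (((Finset.Icc 1 N).filter (fun x => x ∈ D)).card : ℝ)) :
    ∃ F ∈ (Finset.range K).powersetCard n, {L : ℕ | 1 ≤ L ∧ ∃ a,
      c2 / (2 * ((Finset.range K).powersetCard n).card) * L ≤
        (w (colorSet I F) a L : ℝ)}.Infinite := by
  have h𝒻ne : ((Finset.range K).powersetCard n).Nonempty := by
    obtain ⟨F, hF1, hF2⟩ := Finset.exists_subset_card_eq (by simpa using hnK :
      n ≤ (Finset.range K).card)
    exact ⟨F, Finset.mem_powersetCard.mpr ⟨hF1, hF2⟩⟩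
  set 𝒻 := (Finset.range K).powersetCard n with h𝒻
  set r := 𝒻.card with hr
  have hrpos : (0:ℝ) < r := by exact_mod_cast Finset.card_pos.mpr h𝒻ne
  set δ : ℝ := c2 / (2 * r) with hδ
  have hδpos : 0 < δ := by positivity
  have key : ∀ L : ℕ, 1 ≤ L → ∃ F ∈ 𝒻, ∃ a, δ * L ≤ (w (colorSet I F) a L : ℝ) := by
    intro L hL
    obtain ⟨a, ha⟩ := window_exists D c2 hc2 hD L hL
    obtain ⟨F0, hF0, hmax⟩ := Finset.exists_max_image 𝒻
      (fun F => w (colorSet I F) a L) h𝒻ne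
    refine ⟨F0, hF0, a, ?_⟩
    have hcount : w D a L ≤ r * w (colorSet I F0) a L := by
      calc w D a L ≤ (𝒻.biUnion (fun F => (Finset.range L).filter
            (fun i => a + 1 + i ∈ colorSet I F))).card := by
            unfold w
            refine Finset.card_le_card ?_
            intro i hi
            simp only [Finset.mem_filter, Finset.mem_range] at hi
            obtain ⟨hiL, hin⟩ := hi
            have hin' : n ≤ cK I K (a + 1 + i) := (hDc _).mp hin
            unfold cK at hin'
            obtain ⟨F, hF1, hF2⟩ := Finset.exists_subset_card_eq hin'
            refine Finset.mem_biUnion.mpr ⟨F, ?_, ?_⟩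
            · exact Finset.mem_powersetCard.mpr ⟨hF1.trans (Finset.filter_subset _ _), hF2⟩
            · simp only [Finset.mem_filter, Finset.mem_range]
              exact ⟨hiL, fun t ht => (Finset.mem_filter.mp (hF1 ht)).2⟩
        _ ≤ ∑ F ∈ 𝒻, ((Finset.range L).filter (fun i => a + 1 + i ∈ colorSet I F)).card :=
            Finset.card_biUnion_le
        _ = ∑ F ∈ 𝒻, w (colorSet I F) a L := by
            refine Finset.sum_congr rfl fun F _ => ?_
            unfold w
            rfl
        _ ≤ ∑ _F ∈ 𝒻, w (colorSet I F0) a L := Finset.sum_le_sum fun F hF => hmax F hF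
        _ = r * w (colorSet I F0) a L := by rw [Finset.sum_const, smul_eq_mul]
    have hcount' : (w D a L : ℝ) ≤ r * (w (colorSet I F0) a L : ℝ) := by exact_mod_cast hcount
    rw [hδ, div_mul_eq_mul_div, div_le_iff₀ (by positivity)]
    nlinarith
  by_contra hcon
  push_neg at hcon
  have hfin : ∀ F ∈ 𝒻, {L : ℕ | 1 ≤ L ∧ ∃ a, δ * L ≤
      (w (colorSet I F) a L : ℝ)}.Finite := by
    intro F hF
    have := hcon F hF
    exact this
  have hunion : (Set.Ici 1 : Set ℕ) ⊆ ⋃ F ∈ 𝒻, {L : ℕ | 1 ≤ L ∧ ∃ a, δ * L ≤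
      (w (colorSet I F) a L : ℝ)} := by
    intro L hL
    obtain ⟨F, hF, a, ha⟩ := key L hL
    exact Set.mem_biUnion hF ⟨hL, a, ha⟩
  have : (Set.Ici 1 : Set ℕ).Finite :=
    Set.Finite.subset (Set.Finite.biUnion 𝒻.finite_toSet hfin) hunion
  exact (Set.Ici_infinite 1) this

lemma w_le (E : Set ℕ) (b x : ℕ) : w E b x ≤ x := by
  unfold w
  exact (Finset.card_filter_le _ _).trans (le_of_eq (Finset.card_range x))

lemma w_succ (E : Set ℕ) (b x : ℕ) :
    w E b (x + 1) = w E b x + (if b + 1 + x ∈ E then 1 else 0) := by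
  unfold w
  rw [Finset.range_add_one, Finset.filter_insert]
  split_ifs with h
  · rw [Finset.card_insert_of_notMem (fun hmem => by
      have := Finset.mem_range.mp (Finset.mem_filter.mp hmem).1
      omega)]
  · rw [add_zero]

lemma w_add (E : Set ℕ) (b j x : ℕ) : w E b (j + x) = w E b j + w E (b + j) x := by
  induction x with
  | zero => simp [w]
  | succ x ih =>
    have h1 : j + (x + 1) = (j + x) + 1 := by omega
    rw [h1, w_succ, ih, w_succ]
    rw [show b + 1 + (j + x) = b + j + 1 + x from by omega]
    omega

lemma prefix_reg (E : Set ℕ) (a L : ℕ) (δ : ℝ) (hδ : 0 < δ) (hL : 1 ≤ L)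
    (hw : δ * L ≤ (w E a L : ℝ)) :
    ∃ b M : ℕ, δ / 2 * L ≤ (M : ℝ) ∧ ∀ x ≤ M, δ / 2 * x ≤ (w E b x : ℝ) := by
  obtain ⟨j0, hj0mem, hmin⟩ := Finset.exists_min_image (Finset.Icc 0 L)
    (fun j => (w E a j : ℝ) - δ / 2 * j) ⟨0, by simp⟩
  have hj0L : j0 ≤ L := (Finset.mem_Icc.mp hj0mem).2
  refine ⟨a + j0, L - j0, ?_, ?_⟩
  · have h0 : (w E a j0 : ℝ) - δ / 2 * j0 ≤ 0 := by
      have := hmin 0 (by simp)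
      simpa [w] using this
    have hsplit : w E a L = w E a j0 + w E (a + j0) (L - j0) := by
      rw [← w_add]
      congr 1
      omega
    have hle : (w E (a + j0) (L - j0) : ℝ) ≤ ((L - j0 : ℕ) : ℝ) := by
      exact_mod_cast w_le E (a + j0) (L - j0)
    have hcast : (w E a L : ℝ) = (w E a j0 : ℝ) + (w E (a + j0) (L - j0) : ℝ) := by
      exact_mod_cast congrArg (fun k : ℕ => (k : ℝ)) hsplit
    have hj0L' : (j0 : ℝ) ≤ L := by exact_mod_cast hj0L
    nlinarith
  · intro x hx
    have hjx : j0 + x ≤ L := by omega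
    have hmem : j0 + x ∈ Finset.Icc 0 L := Finset.mem_Icc.mpr ⟨Nat.zero_le _, hjx⟩
    have := hmin (j0 + x) hmem
    have hsplit : w E a (j0 + x) = w E a j0 + w E (a + j0) x := w_add E a j0 x
    have hcast : (w E a (j0 + x) : ℝ) = (w E a j0 : ℝ) + (w E (a + j0) x : ℝ) := by
      exact_mod_cast congrArg (fun k : ℕ => (k : ℝ)) hsplit
    push_cast at this ⊢
    nlinarith

/-- greedy `K`-separated subset of `B` -/
def thin (B : Set ℕ) (K : ℕ) : ℕ → Prop
  | b => b ∈ B ∧ ∀ c, c < b → thin B K c → c + K < b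

lemma thin_def (B : Set ℕ) (K b : ℕ) :
    thin B K b ↔ b ∈ B ∧ ∀ c, c < b → thin B K c → c + K < b := by
  rw [thin]

lemma thin_mem {B : Set ℕ} {K b : ℕ} (h : thin B K b) : b ∈ B := ((thin_def B K b).mp h).1

lemma thin_gap {B : Set ℕ} {K b c : ℕ} (hb : thin B K b) (hc : thin B K c) (hlt : c < b) :
    c + K < b := ((thin_def B K b).mp hb).2 c hlt hc

lemma thin_cover {B : Set ℕ} {K b : ℕ} (hb : b ∈ B) :
    ∃ c, thin B K c ∧ c ≤ b ∧ b ≤ c + K := by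
  by_cases h : thin B K b
  · exact ⟨b, h, le_rfl, Nat.le_add_right _ _⟩
  · rw [thin_def] at h
    push_neg at h
    obtain ⟨c, hc1, hc2, hc3⟩ := h hb
    exact ⟨c, hc2, hc1.le, by omega⟩

lemma thin_count (B B' : Set ℕ) (K : ℕ) (hB' : ∀ x, x ∈ B' ↔ thin B K x) (N : ℕ) :
    ((Finset.range N).filter (fun i => i ∈ B)).card ≤
      (K + 1) * ((Finset.range N).filter (fun i => i ∈ B')).card := by
  have hsub : ∀ i ∈ (Finset.range N).filter (fun i => i ∈ B),
      i ∈ ((Finset.range N).filter (fun i => i ∈ B')).biUnion (fun c => Finset.Icc c (c + K)) := by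
    intro i hi
    simp only [Finset.mem_filter, Finset.mem_range] at hi
    obtain ⟨hiN, hiB⟩ := hi
    obtain ⟨c, hc1, hc2, hc3⟩ := thin_cover (K := K) hiB
    refine Finset.mem_biUnion.mpr ⟨c, ?_, Finset.mem_Icc.mpr ⟨hc2, hc3⟩⟩
    simp only [Finset.mem_filter, Finset.mem_range]
    exact ⟨lt_of_le_of_lt hc2 hiN, (hB' c).mpr hc1⟩
  calc ((Finset.range N).filter (fun i => i ∈ B)).card
      ≤ _ := Finset.card_le_card hsub
    _ ≤ ∑ c ∈ (Finset.range N).filter (fun i => i ∈ B'), (Finset.Icc c (c + K)).card :=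
        Finset.card_biUnion_le
    _ = (K + 1) * ((Finset.range N).filter (fun i => i ∈ B')).card := by
        rw [Finset.sum_congr rfl (fun c (_ : c ∈ _) => show (Finset.Icc c (c + K)).card = K + 1 by
          rw [Nat.card_Icc]; omega), Finset.sum_const, smul_eq_mul, mul_comm]

lemma limit_set (E S : Set ℕ) (hS : S.Infinite) (b M : ℕ → ℕ) (δ : ℝ) (hδ : 0 < δ)
    (hM : ∀ L ∈ S, δ * L ≤ (M L : ℝ)) :
    ∃ B : Set ℕ, ∀ ℓ : ℕ, ∃ L ∈ S, ℓ ≤ M L ∧ ∀ i < ℓ, (b L + 1 + i ∈ E ↔ i ∈ B) := by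
  have hne : (Filter.cofinite ⊓ Filter.principal S).NeBot :=
    Filter.cofinite_inf_principal_neBot_iff.mpr hS
  set 𝒰 := Ultrafilter.of (Filter.cofinite ⊓ Filter.principal S) with h𝒰
  have h𝒰le : (𝒰 : Filter ℕ) ≤ Filter.cofinite ⊓ Filter.principal S :=
    Ultrafilter.of_le _
  have hS𝒰 : S ∈ 𝒰 := h𝒰le (Filter.mem_inf_of_right (Filter.mem_principal_self S))
  have hcof : ∀ T : Set ℕ, Tᶜ.Finite → T ∈ 𝒰 := fun T hT =>
    h𝒰le (Filter.mem_inf_of_left (by rwa [Filter.mem_cofinite]))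
  refine ⟨{i | {L | b L + 1 + i ∈ E} ∈ 𝒰}, fun ℓ => ?_⟩
  set B : Set ℕ := {i | {L | b L + 1 + i ∈ E} ∈ 𝒰} with hB
  have hT2 : ∀ i : ℕ, {L | b L + 1 + i ∈ E ↔ i ∈ B} ∈ 𝒰 := by
    intro i
    by_cases hi : i ∈ B
    · have hmem : {L | b L + 1 + i ∈ E} ∈ 𝒰 := hi
      exact Filter.mem_of_superset hmem fun L hL => iff_of_true hL hi
    · have hmem : {L | b L + 1 + i ∈ E}ᶜ ∈ 𝒰 := Ultrafilter.compl_mem_iff_notMem.mpr hi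
      exact Filter.mem_of_superset hmem fun L hL => iff_of_false hL hi
  have hT0 : {L : ℕ | (ℓ : ℝ) ≤ δ * L} ∈ 𝒰 := by
    refine hcof _ (Set.Finite.subset (Set.finite_Iio (⌈(ℓ : ℝ) / δ⌉₊ + 1)) ?_)
    intro L hL
    simp only [Set.mem_compl_iff, Set.mem_setOf_eq, not_le] at hL
    simp only [Set.mem_Iio]
    have hLd : (L : ℝ) < (ℓ : ℝ) / δ := by
      rw [lt_div_iff₀ hδ]
      nlinarith
    have : (L : ℝ) < (⌈(ℓ : ℝ) / δ⌉₊ + 1 : ℕ) := lt_of_lt_of_le hLd (by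
      push_cast
      exact (Nat.le_ceil _).trans (by norm_num))
    exact_mod_cast this
  have hint : (S ∩ {L : ℕ | (ℓ : ℝ) ≤ δ * L} ∩ ⋂ i ∈ Finset.range ℓ,
      {L | b L + 1 + i ∈ E ↔ i ∈ B}) ∈ 𝒰 :=
    Filter.inter_mem (Filter.inter_mem hS𝒰 hT0)
      ((Filter.biInter_finset_mem (Finset.range ℓ)).mpr fun i _ => hT2 i)
  obtain ⟨L, hL⟩ := Filter.nonempty_of_mem hint
  obtain ⟨⟨hLS, hLδ⟩, hLiff⟩ := hL
  refine ⟨L, hLS, ?_, ?_⟩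
  · have h1 : (ℓ : ℝ) ≤ M L := le_trans hLδ (hM L hLS)
    exact_mod_cast h1
  · intro i hi
    have := Set.mem_iInter₂.mp hLiff i (Finset.mem_range.mpr hi)
    exact this

end AuxEnlarge

/-- If `𝒜` has an independence set of positive density then for each `n` there is
an `n`-element set `F ⊆ ℕ` such that the collection
`𝒜_F = { ⋂_{i∈F} f^{-i}(Y_i) : Y_i ∈ 𝒜 }` also has an independence set of
positive density. -/
theorem enlarge_indep_sets {X : Type*} [MetricSpace X] [CompactSpace X]
    (f : X → X) (hf : Continuous f) (𝒜 : Set (Set X))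
    (h : ∃ I : Set ℕ, 0 < lowerDensity I ∧ IsIndepSet f 𝒜 I) (n : ℕ) :
    ∃ F : Finset ℕ, F.card = n ∧
      ∃ B : Set ℕ, 0 < lowerDensity B ∧
        IsIndepSet f
          {S | ∃ Y : ℕ → Set X, (∀ i ∈ F, Y i ∈ 𝒜) ∧ S = ⋂ i ∈ F, f^[i] ⁻¹' Y i}
          B := by
  obtain ⟨I, hIpos, hIindep⟩ := h
  obtain ⟨c, hc, hcnt⟩ := exists_c_of_lowerDensity_pos I hIpos
  set K := ⌈2 * (n : ℝ) / c⌉₊ + n + 1 with hKdef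
  have hK1 : 1 ≤ K := by omega
  have hnK : n ≤ K := by omega
  have hKn : (n : ℝ) ≤ c / 2 * K := by
    have h1 : (2 * (n : ℝ) / c) ≤ (⌈2 * (n : ℝ) / c⌉₊ : ℝ) := Nat.le_ceil _
    have h2 : ((⌈2 * (n : ℝ) / c⌉₊ : ℕ) : ℝ) ≤ K := by
      have hh : ⌈2 * (n : ℝ) / c⌉₊ ≤ K := by rw [hKdef]; omega
      exact_mod_cast hh
    rw [div_le_iff₀ hc] at h1
    nlinarith
  obtain ⟨D, hDc⟩ : ∃ D : Set ℕ, ∀ x, x ∈ D ↔ n ≤ cK I K x := ⟨_, fun _ => Iff.rfl⟩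
  have hD := Dcard_bound I n K c hc hK1 hKn D hDc hcnt
  obtain ⟨F, hF𝒻, hSinf⟩ := exists_color_window I n K hnK (c / 4) (by positivity) D hDc hD
  have hFsub : F ⊆ Finset.range K := (Finset.mem_powersetCard.mp hF𝒻).1
  have hFcard : F.card = n := (Finset.mem_powersetCard.mp hF𝒻).2
  set r := ((Finset.range K).powersetCard n).card with hrdef
  have hr1 : 1 ≤ r := Finset.card_pos.mpr ⟨F, hF𝒻⟩
  have hrpos : (0:ℝ) < r := by exact_mod_cast hr1
  set δ : ℝ := c / 4 / (2 * r) with hδdef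
  have hδpos : 0 < δ := by positivity
  have hreg : ∀ L ∈ {L : ℕ | 1 ≤ L ∧ ∃ a, δ * L ≤ (w (colorSet I F) a L : ℝ)},
      ∃ bb MM : ℕ, δ / 2 * L ≤ (MM : ℝ) ∧
        ∀ x ≤ MM, δ / 2 * x ≤ (w (colorSet I F) bb x : ℝ) := by
    intro L hL
    obtain ⟨hL1, a, ha⟩ := hL
    exact prefix_reg _ a L δ hδpos hL1 ha
  choose! bb MM hMM hPre using hreg
  obtain ⟨B, hBkey⟩ := limit_set (colorSet I F) _ hSinf bb MM (δ / 2) (by positivity) hMM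
  have hBcount : ∀ ℓ : ℕ, δ / 2 * ℓ ≤ (((Finset.range ℓ).filter (fun i => i ∈ B)).card : ℝ) := by
    intro ℓ
    obtain ⟨L, hLS, hℓM, hagree⟩ := hBkey ℓ
    have e : (Finset.range ℓ).filter (fun i => i ∈ B) =
        (Finset.range ℓ).filter (fun i => bb L + 1 + i ∈ colorSet I F) :=
      Finset.filter_congr fun i hi => (hagree i (Finset.mem_range.mp hi)).symm
    rw [e]
    have e2 : ((Finset.range ℓ).filter (fun i => bb L + 1 + i ∈ colorSet I F)).card =
        w (colorSet I F) (bb L) ℓ := rfl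
    rw [e2]
    exact hPre L hLS ℓ hℓM
  obtain ⟨B', hB'⟩ : ∃ B' : Set ℕ, ∀ x, x ∈ B' ↔ thin B K x := ⟨_, fun _ => Iff.rfl⟩
  have hB'B : ∀ x ∈ B', x ∈ B := fun x hx => thin_mem ((hB' x).mp hx)
  have hB'count : ∀ᶠ N : ℕ in Filter.atTop, (δ / (2 * (K + 1))) * N ≤
      (((Finset.range N).filter (fun i => i ∈ B')).card : ℝ) := by
    refine Filter.Eventually.of_forall fun N => ?_
    have h1 := hBcount N
    have h2 : (((Finset.range N).filter (fun i => i ∈ B)).card : ℝ) ≤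
        (K + 1) * (((Finset.range N).filter (fun i => i ∈ B')).card : ℝ) := by
      exact_mod_cast thin_count B B' K hB' N
    have hK1R : (0:ℝ) < (K:ℝ) + 1 := by positivity
    rw [div_mul_eq_mul_div, div_le_iff₀ (by positivity)]
    nlinarith
  have hB'dens : 0 < lowerDensity B' :=
    lowerDensity_pos_of_range B' _ (by positivity) hB'count
  refine ⟨F, hFcard, B', hB'dens, ?_⟩
  intro J hJ Y hY
  simp only [Set.mem_setOf_eq] at hY
  choose! Z hZmem hZeq using hY
  obtain ⟨L, hLS, hℓM, hagree⟩ := hBkey ((J.sup id) + 1)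
  set β := bb L + 1 with hβ
  have hembed : ∀ j ∈ J, ∀ t ∈ F, β + j + t ∈ I := by
    intro j hj t ht
    have hjB : j ∈ B := hB'B j (hJ hj)
    have hjlt : j < J.sup id + 1 := Nat.lt_succ_of_le (Finset.le_sup (f := id) hj)
    have hcol : bb L + 1 + j ∈ colorSet I F := (hagree j hjlt).mpr hjB
    have hmem := (mem_colorSet).mp hcol t ht
    have : β + j + t = bb L + 1 + j + t := by omega
    rw [this]
    exact hmem
  set J' : Finset ℕ := (J ×ˢ F).image (fun p => β + p.1 + p.2) with hJ'def
  have hinj : ∀ p ∈ J ×ˢ F, ∀ q ∈ J ×ˢ F, β + p.1 + p.2 = β + q.1 + q.2 → p = q := by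
    intro p hp q hq heq
    rw [Finset.mem_product] at hp hq
    have hpF : p.2 < K := Finset.mem_range.mp (hFsub hp.2)
    have hqF : q.2 < K := Finset.mem_range.mp (hFsub hq.2)
    have hp1 : thin B K p.1 := (hB' p.1).mp (hJ hp.1)
    have hq1 : thin B K q.1 := (hB' q.1).mp (hJ hq.1)
    rcases lt_trichotomy p.1 q.1 with hlt | heq1 | hgt
    · have := thin_gap hq1 hp1 hlt
      omega
    · have : p.2 = q.2 := by omega
      exact Prod.ext heq1 this
    · have := thin_gap hp1 hq1 hgt
      omega
  set Y' : ℕ → Set X := fun a =>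
    if h : ∃ p, p ∈ J ×ˢ F ∧ β + p.1 + p.2 = a then Z h.choose.1 h.choose.2 else Set.univ
    with hY'def
  have hY'val : ∀ p ∈ J ×ˢ F, Y' (β + p.1 + p.2) = Z p.1 p.2 := by
    intro p hp
    have hex : ∃ q, q ∈ J ×ˢ F ∧ β + q.1 + q.2 = β + p.1 + p.2 := ⟨p, hp, rfl⟩
    rw [hY'def]
    simp only [dif_pos hex]
    have hspec := hex.choose_spec
    have hpq : hex.choose = p := hinj _ hspec.1 _ hp hspec.2
    rw [hpq]
  have hsub : (J' : Set ℕ) ⊆ I := by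
    intro a ha
    rw [Finset.mem_coe, hJ'def, Finset.mem_image] at ha
    obtain ⟨p, hp, rfl⟩ := ha
    rw [Finset.mem_product] at hp
    exact hembed p.1 hp.1 p.2 hp.2
  have hY'mem : ∀ a ∈ J', Y' a ∈ 𝒜 := by
    intro a ha
    rw [hJ'def, Finset.mem_image] at ha
    obtain ⟨p, hp, rfl⟩ := ha
    rw [hY'val p hp]
    rw [Finset.mem_product] at hp
    exact hZmem p.1 hp.1 p.2 hp.2
  obtain ⟨x, hx⟩ := hIindep J' hsub Y' hY'mem
  refine ⟨f^[β] x, ?_⟩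
  rw [Set.mem_iInter₂] at hx ⊢
  intro j hj
  rw [Set.mem_preimage, hZeq j hj, Set.mem_iInter₂]
  intro t ht
  rw [Set.mem_preimage]
  have hpmem : (j, t) ∈ J ×ˢ F := Finset.mem_product.mpr ⟨hj, ht⟩
  have hmem' : β + j + t ∈ J' := by
    rw [hJ'def, Finset.mem_image]
    exact ⟨(j, t), hpmem, rfl⟩
  have hx' := hx (β + j + t) hmem'
  rw [Set.mem_preimage, hY'val (j, t) hpmem] at hx'
  have hiter : f^[t] (f^[j] (f^[β] x)) = f^[β + j + t] x := by
    rw [← Function.iterate_add_apply, ← Function.iterate_add_apply]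
    congr 1
    omega
  rw [hiter]
  exact hx'
end

section
/- Let X be a compact metric space, f : X → X a homeomorphism, and suppose the tuple (A₁, …, A_k) of subsets of X has an independence set with positive density. If for each i, 𝒜_i is a finite collection of sets with A_i ⊆ ⋃𝒜_i, then there exist A′_i ∈ 𝒜_i for each i such that (A′₁, …, A′_k) has an independence set with positive density. -/
open scoped Classical

/-- `I` is an independence set for the tuple `(A 0, …, A (k-1))` with respect to
`f`: for every finite `J ⊆ I` and every selection `s : ℕ → Fin k`, the
intersection `⋂_{j∈J} f^{-j}(A (s j))` is nonempty. -/
def IsTupleIndepSet {X : Type*} {k : ℕ} (f : X → X) (A : Fin k → Set X)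
    (I : Set ℕ) : Prop :=
  ∀ J : Finset ℕ, (J : Set ℕ) ⊆ I → ∀ s : ℕ → Fin k,
    (⋂ j ∈ J, f^[j] ⁻¹' A (s j)).Nonempty

open Finset


theorem ITR_mono {X : Type*} {f : X → X} {k : ℕ} {A : Fin k → Set X} {I I' : Set ℕ}
    (h : IsTupleIndepSet f A I) (hsub : I' ⊆ I) : IsTupleIndepSet f A I' :=
  fun J hJ s => h J (fun _ hx => hsub (hJ hx)) s

theorem ITR_tuple_mono {X : Type*} {f : X → X} {k : ℕ} {A B : Fin k → Set X} {I : Set ℕ}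
    (h : IsTupleIndepSet f A I) (hAB : ∀ i, A i ⊆ B i) : IsTupleIndepSet f B I := by
  intro J hJ s
  obtain ⟨x, hx⟩ := h J hJ s
  refine ⟨x, ?_⟩
  simp only [Set.mem_iInter] at hx ⊢
  exact fun j hj => hAB _ (hx j hj)

theorem ITR_shift {X : Type*} {f : X → X} {k : ℕ} {A : Fin k → Set X} {F : Finset ℕ}
    (h : IsTupleIndepSet f A ↑F) (t : ℕ) :
    IsTupleIndepSet f A ↑((F.filter (fun x => t ≤ x)).image (fun x => x - t)) := by
  intro J hJ s
  have hJ' : ((J.image (fun x => x + t) : Finset ℕ) : Set ℕ) ⊆ ↑F := by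
    intro j hj
    simp only [Finset.coe_image, Set.mem_image, Finset.mem_coe] at hj
    obtain ⟨a, ha, rfl⟩ := hj
    have := hJ ha
    simp only [Finset.coe_image, Set.mem_image, Finset.mem_coe, Finset.mem_filter] at this
    obtain ⟨x, ⟨hxF, hxt⟩, hxa⟩ := this
    have : x = a + t := by omega
    rwa [← this]
  obtain ⟨x, hx⟩ := h _ hJ' (fun m => s (m - t))
  refine ⟨f^[t] x, ?_⟩
  simp only [Set.mem_iInter, Set.mem_preimage] at hx ⊢
  intro j hj
  have hmem : j + t ∈ J.image (fun x => x + t) := Finset.mem_image_of_mem _ hj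
  have := hx _ hmem
  rw [← Function.iterate_add_apply]
  simpa using this

theorem ITR_shift_count (F : Finset ℕ) (t m : ℕ) :
    ((((F.filter (fun x => t ≤ x)).image (fun x => x - t))).filter (fun x => x < m)).card
      = (F.filter (fun x => t ≤ x ∧ x < t + m)).card := by
  have himg : (((F.filter (fun x => t ≤ x)).image (fun x => x - t))).filter (fun x => x < m)
      = (F.filter (fun x => t ≤ x ∧ x < t + m)).image (fun x => x - t) := by
    ext a
    simp only [Finset.mem_filter, Finset.mem_image]
    constructor
    · rintro ⟨⟨x, ⟨hxF, hxt⟩, rfl⟩, ha⟩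
      exact ⟨x, ⟨hxF, hxt, by omega⟩, rfl⟩
    · rintro ⟨x, ⟨hxF, hxt, hxm⟩, rfl⟩
      exact ⟨⟨x, ⟨hxF, hxt⟩, rfl⟩, by omega⟩
  rw [himg, Finset.card_image_of_injOn]
  intro x hx y hy hxy
  simp only [Finset.coe_filter, Set.mem_setOf_eq] at hx hy
  dsimp only at hxy
  omega

theorem ITR_shift_dense (b : ℝ) (hb : 0 ≤ b) (N : ℕ) (W : Finset ℕ) (hW : W ⊆ Finset.range N)
    (hcard : b * N ≤ W.card) :
    ∃ t L : ℕ, t + L = N ∧ (b / 2) * N ≤ L ∧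
      ∀ m : ℕ, m ≤ L → (b / 2) * m ≤ ((W.filter fun x => t ≤ x ∧ x < t + m)).card := by
  set g : ℕ → ℝ := fun j => ((W.filter (fun x => x < j)).card : ℝ) - (b / 2) * j with hg
  obtain ⟨t, htmem, htmin⟩ := Finset.exists_min_image (Finset.range (N + 1)) g ⟨0, by simp⟩
  have htN : t ≤ N := by have := Finset.mem_range.mp htmem; omega
  have hsplit : ∀ j, t ≤ j →
      ((W.filter (fun x => t ≤ x ∧ x < j)).card : ℝ)
        = ((W.filter (fun x => x < j)).card : ℝ) - ((W.filter (fun x => x < t)).card : ℝ) := by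
    intro j hj
    have hun : W.filter (fun x => x < j)
        = (W.filter (fun x => x < t)) ∪ (W.filter (fun x => t ≤ x ∧ x < j)) := by
      ext a; simp only [Finset.mem_filter, Finset.mem_union]; constructor
      · rintro ⟨ha, h2⟩; by_cases hat : a < t
        · exact Or.inl ⟨ha, hat⟩
        · exact Or.inr ⟨ha, by omega, h2⟩
      · rintro (⟨ha, h2⟩ | ⟨ha, h2, h3⟩) <;> exact ⟨ha, by omega⟩
    have hdisj : Disjoint (W.filter (fun x => x < t)) (W.filter (fun x => t ≤ x ∧ x < j)) := by
      rw [Finset.disjoint_left]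
      intro a ha hb'
      simp only [Finset.mem_filter] at ha hb'
      omega
    rw [hun, Finset.card_union_of_disjoint hdisj]
    push_cast; ring
  have hg0 : g t ≤ 0 := by
    have := htmin 0 (by simp)
    simpa [hg] using this
  have hgN : b * N ≤ ((W.filter (fun x => x < N)).card : ℝ) := by
    have hWfull : W.filter (fun x => x < N) = W := by
      apply Finset.filter_true_of_mem
      intro x hx; exact Finset.mem_range.mp (hW hx)
    rw [hWfull]; exact hcard
  have hct : ((W.filter (fun x => x < t)).card : ℝ) ≤ (b / 2) * t := by
    simp only [hg] at hg0; linarith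
  have htNR : (t : ℝ) ≤ N := by exact_mod_cast htN
  refine ⟨t, N - t, by omega, ?_, ?_⟩
  · have hIco : ((W.filter (fun x => t ≤ x ∧ x < N)).card : ℝ) ≤ ((N - t : ℕ) : ℝ) := by
      have hsub : W.filter (fun x => t ≤ x ∧ x < N) ⊆ Finset.Ico t N := by
        intro x hx
        simp only [Finset.mem_filter] at hx
        simp only [Finset.mem_Ico]; omega
      have := Finset.card_le_card hsub
      rw [Nat.card_Ico] at this
      exact_mod_cast this
    have h1 := hsplit N htN
    nlinarith
  · intro m hm
    have htm : t + m ≤ N := by omega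
    have hmem2 : t + m ∈ Finset.range (N + 1) := by simp; omega
    have h2 := htmin _ hmem2
    have h3 := hsplit (t + m) (by omega)
    simp only [hg] at h2
    rw [h3]
    push_cast at h2 ⊢
    nlinarith

theorem ITR_density_lb_of_counts {I : Set ℕ} (b : ℝ) (hb : 0 < b)
    (h : ∀ m : ℕ, b * m - 1 ≤ (((Finset.Icc 1 m).filter (fun x => x ∈ I)).card : ℝ)) :
    0 < lowerDensity I := by
  have hbdd : ∀ m : ℕ, (((Finset.Icc 1 m).filter (fun x => x ∈ I)).card : ℝ) / m ≤ 1 := by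
    intro m
    rcases Nat.eq_zero_or_pos m with hm | hm
    · simp [hm]
    · rw [div_le_one (by exact_mod_cast hm)]
      have := Finset.card_filter_le (Finset.Icc 1 m) (fun x => x ∈ I)
      have h2 : (Finset.Icc 1 m).card = m := by simp
      exact_mod_cast this.trans_eq h2
  have hle : (b / 2 : ℝ) ≤ lowerDensity I := by
    apply Filter.le_liminf_of_le
    · exact Filter.isCoboundedUnder_ge_of_le _ hbdd
    · rw [Filter.eventually_atTop]
      refine ⟨⌈2 / b⌉₊ + 1, fun m hm => ?_⟩
      have hm0 : 0 < m := by omega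
      have hmR : (0:ℝ) < m := by exact_mod_cast hm0
      rw [le_div_iff₀ hmR]
      have h2b : (2 / b : ℝ) ≤ m := by
        have := Nat.le_ceil (2 / b)
        have h3 : ((⌈2 / b⌉₊ : ℝ)) ≤ m := by exact_mod_cast Nat.le_of_succ_le hm
        linarith
      have := h m
      have hbm : 1 ≤ b / 2 * m := by
        rw [div_mul_eq_mul_div, le_div_iff₀ (by norm_num : (0:ℝ) < 2)]
        calc (1:ℝ) * 2 = b * (2 / b) := by field_simp
        _ ≤ b * m := by apply mul_le_mul_of_nonneg_left h2b hb.le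
      linarith
  linarith

theorem ITR_exists_density_lb {I : Set ℕ} (h : 0 < lowerDensity I) :
    ∃ d > 0, ∀ᶠ m in Filter.atTop,
      d * m ≤ (((Finset.Icc 1 m).filter (fun x => x ∈ I)).card : ℝ) := by
  refine ⟨lowerDensity I / 2, by linarith, ?_⟩
  have h1 : ∀ᶠ m in Filter.atTop,
      lowerDensity I / 2 < ((((Finset.Icc 1 m).filter (fun x => x ∈ I)).card : ℝ) / m) := by
    refine Filter.eventually_lt_of_lt_liminf (by rw [lowerDensity] at h ⊢; linarith)
      ⟨0, Filter.eventually_map.mpr (Filter.Eventually.of_forall (fun m => by positivity))⟩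
  filter_upwards [h1, Filter.eventually_gt_atTop 0] with m hm hm0
  have hmR : (0:ℝ) < m := by exact_mod_cast hm0
  rw [lt_div_iff₀ hmR] at hm
  linarith



def ITRGood (q : ℕ) {n : ℕ} {σ : Type*} (S : Finset (Fin n → σ)) (Γ : Fin n → Finset σ) : Prop :=
  (∀ i, Γ i = ∅ ∨ (Γ i).card = q - 1) ∧
  ∀ p : Fin n → σ, (∀ i, Γ i ≠ ∅ → p i ∈ Γ i) → ∃ x ∈ S, ∀ i, Γ i ≠ ∅ → x i = p i

def ITRw (q : ℕ) {n : ℕ} {σ : Type*} [DecidableEq σ] (Γ : Fin n → Finset σ) : ℕ :=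
  ∏ i : Fin n, (if Γ i = ∅ then q - 2 else 1)

theorem ITR_numeric (q r : ℕ) (hq : 2 ≤ q) (hr : r ≤ q) :
    r ≤ (if 0 < r then q - 2 else 0) + r.choose (q - 1) := by
  rcases Nat.eq_zero_or_pos r with h0 | h0
  · simp [h0]
  rw [if_pos h0]
  by_cases hle : r ≤ q - 2
  · have := Nat.zero_le (r.choose (q - 1)); omega
  · have hcases : r = q - 1 ∨ r = q := by omega
    rcases hcases with hr1 | hr1
    · rw [hr1, Nat.choose_self]; omega
    · rw [hr1]
      have h1 : q.choose (q - 1) = q.choose 1 := Nat.choose_symm (by omega)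
      rw [h1, Nat.choose_one_right]; omega

set_option maxHeartbeats 1000000 in
theorem ITR_pajor (q : ℕ) (hq2 : 2 ≤ q) (σ : Type*) [Fintype σ] [DecidableEq σ]
    (hcard : Fintype.card σ = q) :
    ∀ (n : ℕ) (S : Finset (Fin n → σ)),
      S.card ≤ ∑ Γ : Fin n → Finset σ, if ITRGood q S Γ then ITRw q Γ else 0 := by
  intro n
  induction n with
  | zero =>
    intro S
    rcases S.eq_empty_or_nonempty with rfl | ⟨x, hx⟩
    · simp
    · have h1 : S.card ≤ 1 := by
        rw [Finset.card_le_one]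
        intro a _ b _
        funext i; exact absurd i.2 (by omega)
      refine h1.trans ?_
      have hgood : ITRGood q S (fun _ : Fin 0 => (∅ : Finset σ)) :=
        ⟨fun i => Or.inl rfl, fun p _ => ⟨x, hx, fun i => absurd i.2 (by omega)⟩⟩
      have huniv : (Finset.univ : Finset (Fin 0 → Finset σ)) = {fun _ => ∅} := by
        apply Finset.eq_singleton_iff_unique_mem.mpr
        exact ⟨Finset.mem_univ _, fun y _ => funext fun i => absurd i.2 (by omega)⟩
      rw [huniv, Finset.sum_singleton, if_pos hgood]
      simp [ITRw]
  | succ n IH =>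
    intro S
    set Sa : σ → Finset (Fin n → σ) :=
      fun a => (S.filter (fun x => x 0 = a)).image Fin.tail with hSa
    have hcards : S.card = ∑ a : σ, (Sa a).card := by
      rw [Finset.card_eq_sum_card_fiberwise (f := fun x => x 0) (t := Finset.univ)
        (fun x _ => Finset.mem_univ _)]
      refine Finset.sum_congr rfl (fun a _ => ?_)
      rw [hSa]
      rw [Finset.card_image_of_injOn]
      intro x hx y hy hxy
      simp only [Finset.coe_filter, Set.mem_setOf_eq] at hx hy
      have h2 : Fin.cons (x 0) (Fin.tail x) = Fin.cons (y 0) (Fin.tail y) := by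
        rw [hx.2, hy.2, hxy]
      rwa [Fin.cons_self_tail, Fin.cons_self_tail] at h2
    have hw : ∀ (G : Finset σ) (Γ : Fin n → Finset σ),
        ITRw q (Fin.cons G Γ) = (if G = ∅ then q - 2 else 1) * ITRw q Γ := by
      intro G Γ
      by_cases hG : G = ∅ <;>
        simp [ITRw, Fin.prod_univ_succ, hG, Fin.cons_zero, Fin.cons_succ]
    have hclaim1 : ∀ Γ : Fin n → Finset σ, ∀ a : σ, ITRGood q (Sa a) Γ →
        ITRGood q S (Fin.cons (∅ : Finset σ) Γ) := by
      rintro Γ a ⟨hpart, hsh⟩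
      constructor
      · intro i
        refine Fin.cases ?_ ?_ i
        · simp
        · intro j; simpa using hpart j
      · intro p hp
        obtain ⟨x', hx', hagree⟩ := hsh (Fin.tail p) (fun i hi => by
          have := hp i.succ; simpa [Fin.cons_succ, Fin.tail] using this hi)
        rw [hSa] at hx'
        simp only [Finset.mem_image, Finset.mem_filter] at hx'
        obtain ⟨y, ⟨hyS, hy0⟩, hyt⟩ := hx'
        refine ⟨y, hyS, fun i => Fin.cases ?_ ?_ i⟩
        · simp
        · intro j hj
          rw [Fin.cons_succ] at hj
          have h3 := hagree j hj
          rw [← hyt] at h3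
          simpa [Fin.tail] using h3
    have hclaim2 : ∀ Γ : Fin n → Finset σ, ∀ G : Finset σ, G.card = q - 1 →
        (∀ a ∈ G, ITRGood q (Sa a) Γ) → ITRGood q S (Fin.cons G Γ) := by
      intro Γ G hGcard hGa
      have hGne : G.Nonempty := by rw [← Finset.card_pos, hGcard]; omega
      have hGne' : G ≠ ∅ := hGne.ne_empty
      obtain ⟨a₀, ha₀⟩ := hGne
      constructor
      · intro i
        refine Fin.cases ?_ ?_ i
        · simp [hGcard]
        · intro j; simpa using (hGa a₀ ha₀).1 j
      · intro p hp
        have hp0 : p 0 ∈ G := by simpa [Fin.cons_zero, hGne'] using hp 0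
        obtain ⟨hpart, hsh⟩ := hGa (p 0) hp0
        obtain ⟨x', hx', hagree⟩ := hsh (Fin.tail p) (fun i hi => by
          have := hp i.succ; simpa [Fin.cons_succ, Fin.tail] using this hi)
        rw [hSa] at hx'
        simp only [Finset.mem_image, Finset.mem_filter] at hx'
        obtain ⟨y, ⟨hyS, hy0⟩, hyt⟩ := hx'
        refine ⟨y, hyS, fun i => Fin.cases ?_ ?_ i⟩
        · intro _; simpa [Fin.cons_zero] using hy0
        · intro j hj
          rw [Fin.cons_succ] at hj
          have h3 := hagree j hj
          rw [← hyt] at h3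
          simpa [Fin.tail] using h3
    -- the pointwise inequality
    have hpoint : ∀ Γ : Fin n → Finset σ,
        (∑ a : σ, if ITRGood q (Sa a) Γ then ITRw q Γ else 0)
          ≤ (if ITRGood q S (Fin.cons (∅:Finset σ) Γ) then ITRw q (Fin.cons (∅:Finset σ) Γ) else 0)
            + ∑ G ∈ (Finset.univ : Finset (Finset σ)).erase ∅,
                (if ITRGood q S (Fin.cons G Γ) then ITRw q (Fin.cons G Γ) else 0) := by
      intro Γ
      set R : Finset σ := Finset.univ.filter (fun a => ITRGood q (Sa a) Γ) with hR
      set r : ℕ := R.card with hr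
      set w : ℕ := ITRw q Γ with hwdef
      have hLHS : (∑ a : σ, if ITRGood q (Sa a) Γ then ITRw q Γ else 0) = r * w := by
        rw [← Finset.sum_filter, ← hR, Finset.sum_const, smul_eq_mul]
      have hrq : r ≤ q := by
        rw [hr, ← hcard]; exact (Finset.card_filter_le _ _).trans (le_of_eq (by simp))
      have hterm1 : (if 0 < r then (q-2) * w else 0)
          ≤ (if ITRGood q S (Fin.cons (∅:Finset σ) Γ) then ITRw q (Fin.cons (∅:Finset σ) Γ) else 0) := by
        by_cases h0 : 0 < r
        · rw [if_pos h0]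
          obtain ⟨a, ha⟩ := Finset.card_pos.mp h0
          rw [hR, Finset.mem_filter] at ha
          rw [if_pos (hclaim1 Γ a ha.2), hw]
          simp
          exact le_rfl
        · rw [if_neg h0]; exact Nat.zero_le _
      have hterm2 : r.choose (q-1) * w
          ≤ ∑ G ∈ (Finset.univ : Finset (Finset σ)).erase ∅,
              (if ITRGood q S (Fin.cons G Γ) then ITRw q (Fin.cons G Γ) else 0) := by
        have hsub : R.powersetCard (q-1) ⊆ (Finset.univ : Finset (Finset σ)).erase ∅ := by
          intro G hG
          rw [Finset.mem_powersetCard] at hG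
          rw [Finset.mem_erase]
          refine ⟨?_, Finset.mem_univ _⟩
          rw [← Finset.nonempty_iff_ne_empty, ← Finset.card_pos, hG.2]; omega
        calc r.choose (q-1) * w = ∑ _G ∈ R.powersetCard (q-1), w := by
              rw [Finset.sum_const, smul_eq_mul, Finset.card_powersetCard]
        _ = ∑ G ∈ R.powersetCard (q-1),
              (if ITRGood q S (Fin.cons G Γ) then ITRw q (Fin.cons G Γ) else 0) := by
              refine Finset.sum_congr rfl (fun G hG => ?_)
              rw [Finset.mem_powersetCard] at hG
              have hgood : ITRGood q S (Fin.cons G Γ) := by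
                refine hclaim2 Γ G hG.2 (fun a ha => ?_)
                have := hG.1 ha
                rw [hR, Finset.mem_filter] at this
                exact this.2
              have hGne : G ≠ ∅ := by
                rw [← Finset.nonempty_iff_ne_empty, ← Finset.card_pos, hG.2]; omega
              rw [if_pos hgood, hw, if_neg hGne, one_mul]
        _ ≤ _ := Finset.sum_le_sum_of_subset_of_nonneg hsub (fun _ _ _ => by positivity)
      have hnum := ITR_numeric q r hq2 hrq
      calc (∑ a : σ, if ITRGood q (Sa a) Γ then ITRw q Γ else 0) = r * w := hLHS
      _ ≤ ((if 0 < r then q - 2 else 0) + r.choose (q-1)) * w :=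
          Nat.mul_le_mul_right w hnum
      _ = (if 0 < r then (q-2) * w else 0) + r.choose (q-1) * w := by
          rw [add_mul, ite_mul, zero_mul]
      _ ≤ _ := add_le_add hterm1 hterm2
    -- assemble
    calc S.card = ∑ a : σ, (Sa a).card := hcards
    _ ≤ ∑ a : σ, ∑ Γ : Fin n → Finset σ, if ITRGood q (Sa a) Γ then ITRw q Γ else 0 :=
        Finset.sum_le_sum (fun a _ => IH (Sa a))
    _ = ∑ Γ : Fin n → Finset σ, ∑ a : σ, if ITRGood q (Sa a) Γ then ITRw q Γ else 0 :=
        Finset.sum_comm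
    _ ≤ ∑ Γ : Fin n → Finset σ,
          ((if ITRGood q S (Fin.cons (∅:Finset σ) Γ) then ITRw q (Fin.cons (∅:Finset σ) Γ) else 0)
            + ∑ G ∈ (Finset.univ : Finset (Finset σ)).erase ∅,
                (if ITRGood q S (Fin.cons G Γ) then ITRw q (Fin.cons G Γ) else 0)) :=
        Finset.sum_le_sum (fun Γ _ => hpoint Γ)
    _ = ∑ Γ : Fin n → Finset σ, ∑ G : Finset σ,
          (if ITRGood q S (Fin.cons G Γ) then ITRw q (Fin.cons G Γ) else 0) := by
        refine Finset.sum_congr rfl (fun Γ _ => ?_)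
        exact Finset.add_sum_erase Finset.univ
          (fun G => if ITRGood q S (Fin.cons G Γ) then ITRw q (Fin.cons G Γ) else 0)
          (Finset.mem_univ (∅ : Finset σ))
    _ = ∑ G : Finset σ, ∑ Γ : Fin n → Finset σ,
          (if ITRGood q S (Fin.cons G Γ) then ITRw q (Fin.cons G Γ) else 0) := Finset.sum_comm
    _ = ∑ Δ : Fin (n+1) → Finset σ, if ITRGood q S Δ then ITRw q Δ else 0 := by
        have heq := Fintype.sum_equiv (Fin.consEquiv (fun _ : Fin (n+1) => Finset σ))
          (fun p : Finset σ × (Fin n → Finset σ) =>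
            if ITRGood q S (Fin.cons p.1 p.2) then ITRw q (Fin.cons p.1 p.2) else 0)
          (fun Δ : Fin (n+1) → Finset σ => if ITRGood q S Δ then ITRw q Δ else 0)
          (fun p => rfl)
        rw [← heq, Fintype.sum_prod_type]



theorem ITR_sum_bound (q : ℕ) (hq2 : 2 ≤ q) (σ : Type*) [Fintype σ] [DecidableEq σ]
    (hcard : Fintype.card σ = q) (n t : ℕ) (S : Finset (Fin n → σ))
    (hno : ∀ Γ : Fin n → Finset σ, ITRGood q S Γ →
      (Finset.univ.filter (fun i => Γ i ≠ ∅)).card < t) :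
    (S.card : ℝ) ≤ (2*(q:ℝ))^t * ((q:ℝ) - 2 + 1/2)^n := by
  have hq2' : (2:ℝ) ≤ (q:ℝ) := by exact_mod_cast hq2
  set θ : ℝ := (2*(q:ℝ))⁻¹ with hθ
  have h2q : (0:ℝ) < 2*(q:ℝ) := by linarith
  have hθpos : 0 < θ := by positivity
  have h2q1 : (1:ℝ) ≤ 2*(q:ℝ) := by linarith
  set wgt : Finset σ → ℝ :=
    fun G => if G = ∅ then ((q:ℝ) - 2) else if G.card = q - 1 then θ else 0 with hwgt
  have hwgt_nonneg : ∀ G, 0 ≤ wgt G := by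
    intro G; rw [hwgt]
    dsimp only
    split_ifs <;> first | linarith | positivity | norm_num
  -- pointwise bound
  have hpt : ∀ Γ : Fin n → Finset σ,
      ((if ITRGood q S Γ then ITRw q Γ else 0 : ℕ) : ℝ)
        ≤ (2*(q:ℝ))^t * ∏ i, wgt (Γ i) := by
    intro Γ
    by_cases hg : ITRGood q S Γ
    · rw [if_pos hg]
      set s : ℕ := (Finset.univ.filter (fun i => Γ i ≠ ∅)).card with hs
      have hst : s < t := hno Γ hg
      have hsplit : ∏ i, wgt (Γ i)
          = ((q:ℝ) - 2) ^ ((Finset.univ.filter (fun i => Γ i = ∅)).card) * θ ^ s := by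
        rw [← Finset.prod_filter_mul_prod_filter_not Finset.univ (fun i => Γ i = ∅)]
        congr 1
        · rw [Finset.prod_congr rfl (fun i hi => ?_), Finset.prod_const]
          rw [Finset.mem_filter] at hi
          rw [hwgt]; simp [hi.2]
        · rw [Finset.prod_congr rfl (fun i hi => ?_), Finset.prod_const, hs]
          rw [Finset.mem_filter] at hi
          have := (hg.1 i).resolve_left hi.2
          rw [hwgt]; simp [hi.2, this]
      have hwcast : ((ITRw q Γ : ℕ) : ℝ)
          = ((q:ℝ) - 2) ^ ((Finset.univ.filter (fun i => Γ i = ∅)).card) := by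
        rw [ITRw, Nat.cast_prod]
        have hcf : ∀ i : Fin n, ((if Γ i = ∅ then q - 2 else 1 : ℕ) : ℝ)
            = (if Γ i = ∅ then ((q:ℝ) - 2) else 1) := by
          intro i; split_ifs
          · rw [Nat.cast_sub hq2]; norm_num
          · norm_num
        rw [Finset.prod_congr rfl (fun i _ => hcf i)]
        rw [← Finset.prod_filter_mul_prod_filter_not Finset.univ (fun i => Γ i = ∅)
          (fun i => if Γ i = ∅ then ((q:ℝ)-2) else 1)]
        have e1 : (∏ i ∈ Finset.univ.filter (fun i => Γ i = ∅),
            (if Γ i = ∅ then ((q:ℝ)-2) else 1))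
            = ((q:ℝ)-2) ^ ((Finset.univ.filter (fun i => Γ i = ∅)).card) := by
          rw [Finset.prod_congr rfl (fun i hi => if_pos (Finset.mem_filter.mp hi).2),
            Finset.prod_const]
        have e2 : (∏ i ∈ Finset.univ.filter (fun i => ¬ Γ i = ∅),
            (if Γ i = ∅ then ((q:ℝ)-2) else 1)) = 1 := by
          rw [Finset.prod_congr rfl (fun i hi => if_neg (Finset.mem_filter.mp hi).2),
            Finset.prod_const, one_pow]
        rw [e1, e2, mul_one]
      rw [hwcast, hsplit]
      have hfac : (1:ℝ) ≤ (2*(q:ℝ))^t * θ ^ s := by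
        have h1 : (2*(q:ℝ))^s ≤ (2*(q:ℝ))^t := pow_le_pow_right₀ h2q1 hst.le
        have h2 : ((2*(q:ℝ)) * θ)^s = 1 := by
          rw [hθ, mul_inv_cancel₀ (by positivity), one_pow]
        calc (1:ℝ) = ((2*(q:ℝ)) * θ)^s := h2.symm
        _ = (2*(q:ℝ))^s * θ^s := mul_pow _ _ _
        _ ≤ (2*(q:ℝ))^t * θ^s := by
            apply mul_le_mul_of_nonneg_right h1 (by positivity)
      have hbase : (0:ℝ) ≤ ((q:ℝ) - 2) ^ ((Finset.univ.filter (fun i => Γ i = ∅)).card) := by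
        apply pow_nonneg; linarith
      calc ((q:ℝ) - 2) ^ ((Finset.univ.filter (fun i => Γ i = ∅)).card)
          = 1 * (((q:ℝ) - 2) ^ ((Finset.univ.filter (fun i => Γ i = ∅)).card)) := (one_mul _).symm
      _ ≤ ((2*(q:ℝ))^t * θ ^ s) * (((q:ℝ) - 2) ^ ((Finset.univ.filter (fun i => Γ i = ∅)).card)) :=
          mul_le_mul_of_nonneg_right hfac hbase
      _ = (2*(q:ℝ))^t * (((q:ℝ) - 2) ^ ((Finset.univ.filter (fun i => Γ i = ∅)).card) * θ ^ s) := by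
          ring
    · rw [if_neg hg]
      push_cast
      exact mul_nonneg (by positivity) (Finset.prod_nonneg (fun i _ => hwgt_nonneg _))
  -- sum the pointwise bound
  have h1 : (S.card : ℝ) ≤ ∑ Γ : Fin n → Finset σ,
      ((if ITRGood q S Γ then ITRw q Γ else 0 : ℕ) : ℝ) := by
    have := ITR_pajor q hq2 σ hcard n S
    exact_mod_cast this
  have h2 : (∑ Γ : Fin n → Finset σ, ((if ITRGood q S Γ then ITRw q Γ else 0 : ℕ) : ℝ))
      ≤ (2*(q:ℝ))^t * ∑ Γ : Fin n → Finset σ, ∏ i, wgt (Γ i) := by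
    rw [Finset.mul_sum]
    exact Finset.sum_le_sum (fun Γ _ => hpt Γ)
  have h3 : (∑ Γ : Fin n → Finset σ, ∏ i, wgt (Γ i)) = ((q:ℝ) - 2 + 1/2)^n := by
    have hswap := Finset.prod_univ_sum (fun _ : Fin n => (Finset.univ : Finset (Finset σ)))
      (fun _ G => wgt G)
    rw [Fintype.piFinset_univ] at hswap
    rw [← hswap]
    have hinner : (∑ G : Finset σ, wgt G) = (q:ℝ) - 2 + 1/2 := by
      have hsplit2 : ∀ G : Finset σ, wgt G
          = (if G = ∅ then ((q:ℝ) - 2) else 0) + (if G.card = q - 1 then θ else 0) := by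
        intro G
        rw [hwgt]
        by_cases hG : G = ∅
        · have h0 : ¬ ((0:ℕ) = q - 1) := by omega
          simp [hG, Finset.card_empty, h0]
        · simp [hG]
      rw [Finset.sum_congr rfl (fun G _ => hsplit2 G), Finset.sum_add_distrib]
      have hA : (∑ G : Finset σ, if G = ∅ then ((q:ℝ) - 2) else 0) = (q:ℝ) - 2 := by
        rw [Finset.sum_ite_eq' Finset.univ (∅ : Finset σ) (fun _ => (q:ℝ) - 2)]
        simp
      have hB : (∑ G : Finset σ, if G.card = q - 1 then θ else 0) = 1/2 := by
        rw [← Finset.sum_filter]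
        rw [Finset.sum_const]
        have hc : (Finset.univ.filter (fun G : Finset σ => G.card = q - 1)).card = q := by
          have : Finset.univ.filter (fun G : Finset σ => G.card = q - 1)
              = (Finset.univ : Finset σ).powersetCard (q-1) := by
            rw [Finset.powersetCard_eq_filter, Finset.powerset_univ]
          rw [this, Finset.card_powersetCard, Finset.card_univ, hcard]
          have h1 : q.choose (q - 1) = q.choose 1 := Nat.choose_symm (by omega)
          rw [h1, Nat.choose_one_right]
        rw [hc, nsmul_eq_mul, hθ]
        field_simp
      rw [hA, hB]
    rw [hinner, Finset.prod_const, Finset.card_univ, Fintype.card_fin]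
  calc (S.card : ℝ) ≤ _ := h1
  _ ≤ _ := h2
  _ = (2*(q:ℝ))^t * ((q:ℝ) - 2 + 1/2)^n := by rw [h3]


theorem ITR_const_exists (q : ℕ) (hq2 : 2 ≤ q) :
    ∃ c : ℝ, 0 < c ∧ c ≤ 1 ∧ ∃ N₀ : ℕ, ∀ n : ℕ, N₀ ≤ n →
      (2*(q:ℝ))^(⌈c * n⌉₊) * ((q:ℝ) - 2 + 1/2)^n < ((q:ℝ) - 1)^n := by
  have hq2' : (2:ℝ) ≤ (q:ℝ) := by exact_mod_cast hq2
  set Q : ℝ := (q:ℝ) with hQ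
  have h2Q : (0:ℝ) < 2*Q := by linarith
  have h2Q1 : (1:ℝ) < 2*Q := by linarith
  set ρ : ℝ := (Q - 1)/(Q - 2 + 1/2) with hρ
  have hden : (0:ℝ) < Q - 2 + 1/2 := by linarith
  have hρ1 : 1 < ρ := by
    rw [hρ, lt_div_iff₀ hden]; linarith
  -- find c
  have hcont : Filter.Tendsto (fun c : ℝ => (2*Q) ^ c) (nhds 0) (nhds 1) := by
    have := (Real.continuousAt_const_rpow (a := 2*Q) (b := 0) (by positivity)).tendsto
    simpa [Real.rpow_zero] using this
  have hev : ∀ᶠ c : ℝ in nhds 0, (2*Q) ^ c < ρ :=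
    hcont.eventually_lt_const hρ1
  have hev2 : ∀ᶠ c : ℝ in nhdsWithin 0 (Set.Ioi 0), (2*Q) ^ c < ρ :=
    Filter.Eventually.filter_mono nhdsWithin_le_nhds hev
  have hev3 : ∀ᶠ c : ℝ in nhdsWithin 0 (Set.Ioi 0), c ≤ 1 := by
    apply Filter.Eventually.filter_mono nhdsWithin_le_nhds
    have : Set.Iio (1:ℝ) ∈ nhds (0:ℝ) := Iio_mem_nhds (by norm_num)
    exact Filter.eventually_of_mem this (fun c hc => le_of_lt hc)
  have hev4 : ∀ᶠ c : ℝ in nhdsWithin 0 (Set.Ioi 0), 0 < c :=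
    eventually_mem_nhdsWithin.mono (fun c hc => hc)
  obtain ⟨c, ⟨hcρ, hc1⟩, hc0⟩ := ((hev2.and hev3).and hev4).exists
  refine ⟨c, hc0, hc1, ?_⟩
  set γ : ℝ := (2*Q) ^ c with hγ
  have hγpos : 0 < γ := Real.rpow_pos_of_pos h2Q _
  set x : ℝ := γ * (Q - 2 + 1/2) / (Q - 1) with hx
  have hQ1 : (0:ℝ) < Q - 1 := by linarith
  have hx1 : x < 1 := by
    rw [hx, div_lt_one hQ1]
    calc γ * (Q - 2 + 1/2) < ρ * (Q - 2 + 1/2) := by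
          apply mul_lt_mul_of_pos_right hcρ hden
    _ = Q - 1 := by rw [hρ, div_mul_cancel₀ _ hden.ne']
  have hx0 : 0 ≤ x := by positivity
  have htend : Filter.Tendsto (fun n : ℕ => (2*Q) * x^n) Filter.atTop (nhds 0) := by
    have := tendsto_pow_atTop_nhds_zero_of_lt_one hx0 hx1
    simpa using this.const_mul (2*Q)
  have hlt : ∀ᶠ n : ℕ in Filter.atTop, (2*Q) * x^n < 1 :=
    htend.eventually_lt_const (by norm_num)
  obtain ⟨N₀, hN₀⟩ := Filter.eventually_atTop.mp hlt
  refine ⟨N₀, fun n hn => ?_⟩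
  have hkey := hN₀ n hn
  -- (2Q)^⌈cn⌉ ≤ 2Q * γ^n
  have hceil : ((⌈c * n⌉₊ : ℕ) : ℝ) ≤ c * n + 1 := by
    have := Nat.ceil_lt_add_one (by positivity : (0:ℝ) ≤ c * n)
    linarith
  have hpow : (2*Q)^(⌈c * n⌉₊) ≤ (2*Q) * γ^n := by
    have h1 : (2*Q)^(⌈c * n⌉₊) = (2*Q) ^ ((⌈c * n⌉₊ : ℕ) : ℝ) := by
      rw [Real.rpow_natCast]
    have h2 : (2*Q) ^ ((⌈c * n⌉₊ : ℕ) : ℝ) ≤ (2*Q) ^ (c * n + 1) :=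
      Real.rpow_le_rpow_of_exponent_le h2Q1.le hceil
    have h3 : (2*Q) ^ (c * n + 1) = (2*Q) * γ^n := by
      rw [Real.rpow_add h2Q, Real.rpow_one, hγ, ← Real.rpow_natCast ((2*Q)^c) n,
        ← Real.rpow_mul h2Q.le]
      ring_nf
    rw [h1]; rw [h3] at h2; linarith
  have hfin : (2*Q) * γ^n * (Q - 2 + 1/2)^n < (Q - 1)^n := by
    have hxn : (2*Q) * x^n * (Q-1)^n < (Q-1)^n := by
      have := mul_lt_mul_of_pos_right hkey (pow_pos hQ1 n)
      linarith [this]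
    have hxeq : x^n * (Q-1)^n = γ^n * (Q - 2 + 1/2)^n := by
      rw [hx, div_pow, div_mul_cancel₀ _ (pow_ne_zero n hQ1.ne'), mul_pow]
    calc (2*Q) * γ^n * (Q - 2 + 1/2)^n = (2*Q) * (γ^n * (Q - 2 + 1/2)^n) := by ring
    _ = (2*Q) * (x^n * (Q-1)^n) := by rw [hxeq]
    _ = (2*Q) * x^n * (Q-1)^n := by ring
    _ < (Q - 1)^n := hxn
  calc (2*Q)^(⌈c * n⌉₊) * (Q - 2 + 1/2)^n ≤ ((2*Q) * γ^n) * (Q - 2 + 1/2)^n := by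
        apply mul_le_mul_of_nonneg_right hpow (by positivity)
  _ = (2*Q) * γ^n * (Q - 2 + 1/2)^n := by ring
  _ < (Q - 1)^n := hfin

theorem ITR_exists_big_good (q : ℕ) (hq2 : 2 ≤ q) :
    ∃ c : ℝ, 0 < c ∧ c ≤ 1 ∧ ∃ N₀ : ℕ, ∀ (n : ℕ), N₀ ≤ n →
    ∀ (σ : Type) (_ : Fintype σ) (_ : DecidableEq σ), Fintype.card σ = q →
    ∀ S : Finset (Fin n → σ), ((q:ℝ) - 1)^n ≤ (S.card : ℝ) →
      ∃ Γ : Fin n → Finset σ, ITRGood q S Γ ∧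
        c * n ≤ ((Finset.univ.filter (fun i => Γ i ≠ ∅)).card : ℝ) := by
  obtain ⟨c, hc0, hc1, N₀, hN₀⟩ := ITR_const_exists q hq2
  refine ⟨c, hc0, hc1, N₀, fun n hn σ _ _ hcard S hS => ?_⟩
  by_contra hno
  push_neg at hno
  have hno' : ∀ Γ : Fin n → Finset σ, ITRGood q S Γ →
      (Finset.univ.filter (fun i => Γ i ≠ ∅)).card < ⌈c * n⌉₊ := by
    intro Γ hg
    have h1 := hno Γ hg
    have h2 : ((Finset.univ.filter (fun i => Γ i ≠ ∅)).card : ℝ) < c * n := by simpa only [Finset.nonempty_iff_ne_empty] using h1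
    have h3 := Nat.le_ceil (c * n)
    have : ((Finset.univ.filter (fun i => Γ i ≠ ∅)).card : ℝ) < ((⌈c * n⌉₊ : ℕ) : ℝ) := by
      linarith
    exact_mod_cast this
  have hb := ITR_sum_bound q hq2 σ hcard n (⌈c * n⌉₊) S hno'
  have := hN₀ n hn
  linarith



theorem ITR_empty_indep {X : Type*} (f : X → X) {k : ℕ} (A : Fin k → Set X) (x₀ : X) :
    IsTupleIndepSet f A ↑(∅ : Finset ℕ) := by
  intro J hJ s
  have hJe : J = ∅ := by
    rw [← Finset.subset_empty]
    intro a ha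
    exact absurd (hJ ha) (by simp)
  subst hJe
  exact ⟨x₀, by simp⟩

theorem ITR_split {X : Type*} (f : X → X) {k : ℕ} (hk : 1 ≤ k) :
    ∃ c : ℝ, 0 < c ∧ c ≤ 1 ∧ ∃ C₀ : ℝ, 0 ≤ C₀ ∧
    ∀ (A : Fin k → Set X) (i₀ : Fin k) (B C' : Set X), A i₀ ⊆ B ∪ C' →
    ∀ F : Finset ℕ, IsTupleIndepSet f A ↑F →
    ∃ D : Set X, (D = B ∨ D = C') ∧ ∃ F' : Finset ℕ, F' ⊆ F ∧
      c * F.card - C₀ ≤ F'.card ∧ IsTupleIndepSet f (Function.update A i₀ D) ↑F' := by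
  obtain ⟨c, hc0, hc1, N₀, hN₀⟩ := ITR_exists_big_good (2*k) (by omega)
  refine ⟨c/2, by linarith, by linarith, c/2 * N₀ + 1, by positivity, ?_⟩
  intro A i₀ B C' hBC F hind
  -- X is nonempty
  obtain ⟨x₀, -⟩ := hind ∅ (by simp) (fun _ => ⟨0, hk⟩)
  set n := F.card with hn
  by_cases hnN : n < N₀
  · refine ⟨B, Or.inl rfl, ∅, Finset.empty_subset _, ?_, ITR_empty_indep f _ x₀⟩
    simp only [Finset.card_empty, Nat.cast_zero]
    have : (n:ℝ) ≤ N₀ := by exact_mod_cast hnN.le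
    nlinarith
  push_neg at hnN
  set σ := Fin k × Bool with hσ
  have hcardσ : Fintype.card σ = 2*k := by
    simp [hσ, Fintype.card_prod]; ring
  set e : Fin n ≃ {x // x ∈ F} := F.equivFin.symm with he
  set interp : σ → Set X :=
    fun p => if p.1 = i₀ then (if p.2 then B else C') else A p.1 with hinterp
  set S : Finset (Fin n → σ) :=
    Finset.univ.filter (fun τ => ∃ x : X, ∀ l : Fin n, f^[(e l : ℕ)] x ∈ interp (τ l)) with hS
  -- witnesses for base patterns
  have hwit : ∀ s : Fin n → Fin k, ∃ x : X, ∀ l, f^[(e l : ℕ)] x ∈ A (s l) := by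
    intro s
    set sbb : ℕ → Fin k := fun j => if h : j ∈ F then s (F.equivFin ⟨j, h⟩) else ⟨0, hk⟩ with hsbb
    obtain ⟨x, hx⟩ := hind F (by simp) sbb
    refine ⟨x, fun l => ?_⟩
    simp only [Set.mem_iInter, Set.mem_preimage] at hx
    have h1 := hx (e l : ℕ) (e l).2
    have h2 : sbb (e l : ℕ) = s l := by
      rw [hsbb]
      simp only
      rw [dif_pos (e l).2]
      congr 1
      have : (⟨(e l : ℕ), (e l).2⟩ : {x // x ∈ F}) = e l := Subtype.ext rfl
      rw [this, he]
      exact Equiv.apply_symm_apply _ _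
    rwa [h2] at h1
  choose xw hxw using hwit
  -- lower bound on S.card
  set Λ : Finset σ := Finset.univ.filter (fun p => p.1 = i₀ → p.2 = true) with hΛ
  have hΛcard : Λ.card = 2*k - 1 := by
    have : Λ = Finset.univ.erase (i₀, false) := by
      ext p
      simp only [hΛ, Finset.mem_filter, Finset.mem_erase, Finset.mem_univ, true_and, and_true]
      constructor
      · intro h hab
        rw [Prod.ext_iff] at hab
        have h2 := h hab.1
        rw [hab.2] at h2
        simp at h2
      · intro h ha
        by_contra hb
        apply h
        rw [Prod.ext_iff]
        exact ⟨ha, by simpa using hb⟩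
    rw [this, Finset.card_erase_of_mem (Finset.mem_univ _), Finset.card_univ, hcardσ]
  set D₀ : Finset (Fin n → σ) := Fintype.piFinset (fun _ : Fin n => Λ) with hD₀
  have hD₀card : D₀.card = (2*k - 1)^n := by
    rw [hD₀, Fintype.card_piFinset]
    simp [hΛcard, Finset.prod_const]
  set Φ : (Fin n → σ) → (Fin n → σ) := fun g l =>
    if (g l).1 = i₀ then
      (i₀, if f^[(e l : ℕ)] (xw (fun m => (g m).1)) ∈ B then true else false)
    else g l with hΦ
  have hΦS : ∀ g ∈ D₀, Φ g ∈ S := by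
    intro g _
    rw [hS, Finset.mem_filter]
    refine ⟨Finset.mem_univ _, xw (fun m => (g m).1), fun l => ?_⟩
    have hxl := hxw (fun m => (g m).1) l
    rw [hΦ]
    simp only
    by_cases hg : (g l).1 = i₀
    · rw [if_pos hg, hinterp]
      simp only [if_pos rfl]
      by_cases hB : f^[(e l : ℕ)] (xw (fun m => (g m).1)) ∈ B
      · rw [if_pos hB]; simpa using hB
      · rw [if_neg hB]
        simp only [Bool.if_false_right, Bool.and_true, if_neg (Bool.false_ne_true)]
        rw [hg] at hxl
        rcases hBC hxl with h | h
        · exact absurd h hB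
        · simpa using h
    · rw [if_neg hg, hinterp]
      simp only [if_neg hg]
      exact hxl
  have hΦinj : Set.InjOn Φ ↑D₀ := by
    intro g hg g' hg' hEq
    have hgΛ : ∀ l, g l ∈ Λ := by
      intro l
      have h3 := Finset.mem_coe.mp hg
      rw [hD₀, Fintype.mem_piFinset] at h3
      exact h3 l
    have hgΛ' : ∀ l, g' l ∈ Λ := by
      intro l
      have h3 := Finset.mem_coe.mp hg'
      rw [hD₀, Fintype.mem_piFinset] at h3
      exact h3 l
    funext l
    have hl := congrFun hEq l
    rw [hΦ] at hl
    simp only at hl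
    by_cases h1 : (g l).1 = i₀ <;> by_cases h2 : (g' l).1 = i₀
    · have hb1 : (g l).2 = true := by
        have := hgΛ l; rw [hΛ, Finset.mem_filter] at this; exact this.2 h1
      have hb2 : (g' l).2 = true := by
        have := hgΛ' l; rw [hΛ, Finset.mem_filter] at this; exact this.2 h2
      have hgl : g l = (i₀, true) := by rw [Prod.ext_iff]; exact ⟨h1, hb1⟩
      have hgl' : g' l = (i₀, true) := by rw [Prod.ext_iff]; exact ⟨h2, hb2⟩
      rw [hgl, hgl']
    · rw [if_pos h1, if_neg h2] at hl
      have h4 : (i₀ : Fin k) = (g' l).1 := congrArg Prod.fst hl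
      exact absurd h4.symm h2
    · rw [if_neg h1, if_pos h2] at hl
      have h4 : (g l).1 = i₀ := congrArg Prod.fst hl
      exact absurd h4 h1
    · rwa [if_neg h1, if_neg h2] at hl
  have hScard : ((2*(k:ℝ)) - 1)^n ≤ (S.card : ℝ) := by
    have h1 : D₀.card ≤ S.card := Finset.card_le_card_of_injOn Φ hΦS hΦinj
    have h2 : ((2*k - 1 : ℕ) : ℝ) = 2*(k:ℝ) - 1 := by
      push_cast [Nat.cast_sub (by omega : 1 ≤ 2*k)]
      ring
    calc ((2*(k:ℝ)) - 1)^n = ((2*k - 1 : ℕ) : ℝ)^n := by rw [h2]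
    _ = (D₀.card : ℝ) := by rw [hD₀card]; push_cast; ring
    _ ≤ _ := by exact_mod_cast h1
  -- apply the combinatorial lemma
  have hq' : ((2*k : ℕ) : ℝ) - 1 = 2*(k:ℝ) - 1 := by push_cast; ring
  obtain ⟨Γ, hΓ, hΓbig⟩ := hN₀ n hnN σ _ _ hcardσ S (by rw [hq']; exact hScard)
  set Wsupp : Finset (Fin n) := Finset.univ.filter (fun l => Γ l ≠ ∅) with hWsupp
  have hmiss : ∀ l ∈ Wsupp, ∀ i : Fin k, ∃ b : Bool, (i, b) ∈ Γ l := by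
    intro l hl i
    by_contra hcon
    push_neg at hcon
    have hcard : (Γ l).card = 2*k - 1 := by
      rw [hWsupp, Finset.mem_filter] at hl
      have := (hΓ.1 l).resolve_left hl.2
      omega
    have hsub : Γ l ⊆ (Finset.univ.erase (i, true)).erase (i, false) := by
      intro p hp
      rw [Finset.mem_erase, Finset.mem_erase]
      refine ⟨?_, ?_, Finset.mem_univ _⟩
      · intro hpe; rw [hpe] at hp; exact hcon false hp
      · intro hpe; rw [hpe] at hp; exact hcon true hp
    have hcard2 := Finset.card_le_card hsub
    rw [Finset.card_erase_of_mem, Finset.card_erase_of_mem (Finset.mem_univ _),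
      Finset.card_univ, hcardσ] at hcard2
    · omega
    · rw [Finset.mem_erase]
      exact ⟨fun h => absurd (congrArg Prod.snd h) (by simp), Finset.mem_univ _⟩
  -- the key construction
  have main : ∀ (χ : Bool) (W₂ : Finset (Fin n)), W₂ ⊆ Wsupp → (∀ l ∈ W₂, (i₀, χ) ∈ Γ l) →
      IsTupleIndepSet f (Function.update A i₀ (if χ then B else C'))
        ↑(W₂.image (fun l => ((e l : ℕ)))) := by
    intro χ W₂ hW₂sub hW₂χ J hJ s
    set bsel : Fin n → Fin k → Bool := fun l i =>
      if h : ∃ b, (i, b) ∈ Γ l then Classical.choose h else true with hbsel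
    have hbsel_mem : ∀ l ∈ Wsupp, ∀ i, (i, bsel l i) ∈ Γ l := by
      intro l hl i
      have h := hmiss l hl i
      rw [hbsel]
      simp only [dif_pos h]
      exact Classical.choose_spec h
    set junk : Fin n → σ := fun l =>
      if h : (Γ l).Nonempty then h.choose else (i₀, true) with hjunk
    set p : Fin n → σ := fun l =>
      if l ∈ W₂ ∧ (e l : ℕ) ∈ J then
        (if s (e l : ℕ) = i₀ then (i₀, χ) else (s (e l : ℕ), bsel l (s (e l : ℕ))))
      else junk l with hp
    have hpmem : ∀ l, Γ l ≠ ∅ → p l ∈ Γ l := by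
      intro l hlne
      rw [hp]
      simp only
      by_cases hin : l ∈ W₂ ∧ (e l : ℕ) ∈ J
      · rw [if_pos hin]
        by_cases hsi : s (e l : ℕ) = i₀
        · rw [if_pos hsi]; exact hW₂χ l hin.1
        · rw [if_neg hsi]
          exact hbsel_mem l (hW₂sub hin.1) _
      · rw [if_neg hin, hjunk]
        have hne : (Γ l).Nonempty := Finset.nonempty_iff_ne_empty.mpr hlne
        simp only [dif_pos hne]
        exact hne.choose_spec
    obtain ⟨τ, hτS, hτag⟩ := hΓ.2 p hpmem
    rw [hS, Finset.mem_filter] at hτS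
    obtain ⟨-, x, hx⟩ := hτS
    refine ⟨x, ?_⟩
    simp only [Set.mem_iInter, Set.mem_preimage]
    intro j hj
    have hjmem : j ∈ W₂.image (fun l => ((e l : ℕ))) := hJ hj
    rw [Finset.mem_image] at hjmem
    obtain ⟨l, hlW₂, hlj⟩ := hjmem
    have hlsupp : l ∈ Wsupp := hW₂sub hlW₂
    have hlne : Γ l ≠ ∅ := by
      rw [hWsupp, Finset.mem_filter] at hlsupp; exact hlsupp.2
    have hτl : τ l = p l := hτag l hlne
    have hxl := hx l
    rw [hτl, hp] at hxl
    simp only at hxl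
    rw [if_pos ⟨hlW₂, by rw [hlj]; exact hj⟩] at hxl
    subst hlj
    by_cases hsi : s (e l : ℕ) = i₀
    · rw [if_pos hsi, hinterp] at hxl
      simp only [if_pos rfl] at hxl
      rw [hsi, Function.update_self]
      exact hxl
    · rw [if_neg hsi, hinterp] at hxl
      simp only [if_neg hsi] at hxl
      rw [Function.update_of_ne hsi]
      exact hxl
  -- pigeonhole on the two colors
  set Wt : Finset (Fin n) := Wsupp.filter (fun l => (i₀, true) ∈ Γ l) with hWt
  set Wf : Finset (Fin n) := Wsupp.filter (fun l => (i₀, false) ∈ Γ l) with hWf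
  have hcover : Wsupp.card ≤ Wt.card + Wf.card := by
    have hsub : Wsupp ⊆ Wt ∪ Wf := by
      intro l hl
      obtain ⟨b, hb⟩ := hmiss l hl i₀
      cases b
      · exact Finset.mem_union_right _ (Finset.mem_filter.mpr ⟨hl, hb⟩)
      · exact Finset.mem_union_left _ (Finset.mem_filter.mpr ⟨hl, hb⟩)
    exact (Finset.card_le_card hsub).trans (Finset.card_union_le _ _)
  have himgcard : ∀ W₂ : Finset (Fin n),
      (W₂.image (fun l => ((e l : ℕ)))).card = W₂.card := by
    intro W₂
    apply Finset.card_image_of_injOn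
    intro a _ b _ hab
    exact e.injective (Subtype.ext hab)
  have himgsub : ∀ W₂ : Finset (Fin n), (W₂.image (fun l => ((e l : ℕ)))) ⊆ F := by
    intro W₂ j hj
    rw [Finset.mem_image] at hj
    obtain ⟨l, -, rfl⟩ := hj
    exact (e l).2
  have hbound : ∀ (W₂ : Finset (Fin n)), (Wsupp.card : ℝ) ≤ 2 * W₂.card →
      c/2 * (F.card : ℝ) - (c/2 * N₀ + 1) ≤ ((W₂.image (fun l => ((e l : ℕ)))).card : ℝ) := by
    intro W₂ hW₂
    rw [himgcard]
    have := hΓbig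
    have hnn : (F.card : ℝ) = (n : ℝ) := by rw [hn]
    nlinarith [hc0]
  by_cases hbig : Wf.card ≤ Wt.card
  · refine ⟨B, Or.inl rfl, Wt.image (fun l => ((e l : ℕ))), himgsub Wt, ?_, ?_⟩
    · apply hbound
      have : (Wsupp.card : ℝ) ≤ (Wt.card : ℝ) + (Wf.card : ℝ) := by exact_mod_cast hcover
      have h2 : (Wf.card : ℝ) ≤ (Wt.card : ℝ) := by exact_mod_cast hbig
      linarith
    · have := main true Wt (Finset.filter_subset _ _)
        (fun l hl => (Finset.mem_filter.mp hl).2)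
      simpa using this
  · push_neg at hbig
    refine ⟨C', Or.inr rfl, Wf.image (fun l => ((e l : ℕ))), himgsub Wf, ?_, ?_⟩
    · apply hbound
      have : (Wsupp.card : ℝ) ≤ (Wt.card : ℝ) + (Wf.card : ℝ) := by exact_mod_cast hcover
      have h2 : (Wt.card : ℝ) ≤ (Wf.card : ℝ) := by exact_mod_cast hbig.le
      linarith
    · have := main false Wf (Finset.filter_subset _ _)
        (fun l hl => (Finset.mem_filter.mp hl).2)
      simpa using this



theorem ITR_refine {X : Type*} (f : X → X) {k : ℕ} (hk : 1 ≤ k) :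
    ∀ (m : ℕ) (𝒜 : Fin k → Finset (Set X)), (∑ i, (𝒜 i).card) = m →
    (∀ i, (𝒜 i).Nonempty) →
    ∃ c : ℝ, 0 < c ∧ c ≤ 1 ∧ ∃ C₀ : ℝ, 0 ≤ C₀ ∧
    ∀ (A : Fin k → Set X), (∀ i, A i ⊆ ⋃₀ ↑(𝒜 i)) →
    ∀ F : Finset ℕ, IsTupleIndepSet f A ↑F →
    ∃ A' : Fin k → Set X, (∀ i, A' i ∈ 𝒜 i) ∧ ∃ F' : Finset ℕ, F' ⊆ F ∧
      c * F.card - C₀ ≤ F'.card ∧ IsTupleIndepSet f A' ↑F' := by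
  intro m
  induction m using Nat.strong_induction_on with
  | _ m IH =>
  intro 𝒜 hm hne
  by_cases hall : ∀ i, (𝒜 i).card = 1
  · refine ⟨1, one_pos, le_refl _, 0, le_refl _, ?_⟩
    intro A hcov F hind
    have hsel : ∀ i, ∃ a, 𝒜 i = {a} := fun i => Finset.card_eq_one.mp (hall i)
    choose a ha using hsel
    refine ⟨a, fun i => by rw [ha i]; exact Finset.mem_singleton_self _,
      F, Finset.Subset.refl _, by simp, ?_⟩
    refine ITR_tuple_mono hind (fun i => ?_)
    have := hcov i
    rw [ha i] at this
    simpa using this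
  · push_neg at hall
    obtain ⟨i₀, hi₀⟩ := hall
    have hi₀2 : 2 ≤ (𝒜 i₀).card := by
      have h1 := (hne i₀).card_pos
      omega
    obtain ⟨B, hB⟩ := hne i₀
    obtain ⟨c₁, hc₁0, hc₁1, C₁, hC₁0, hsplit⟩ := ITR_split f hk (X := X)
    -- the two refined families
    set 𝒜₁ : Fin k → Finset (Set X) := Function.update 𝒜 i₀ {B} with h𝒜₁
    set 𝒜₂ : Fin k → Finset (Set X) := Function.update 𝒜 i₀ ((𝒜 i₀).erase B) with h𝒜₂
    have hsum : ∀ (v : Finset (Set X)), (∑ i, (Function.update 𝒜 i₀ v i).card)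
        = v.card + ∑ i ∈ Finset.univ.erase i₀, (𝒜 i).card := by
      intro v
      have h1 : ∀ i, (Function.update 𝒜 i₀ v i).card
          = Function.update (fun j => (𝒜 j).card) i₀ v.card i := by
        intro i
        by_cases hi : i = i₀
        · subst hi; simp
        · rw [Function.update_of_ne hi, Function.update_of_ne hi]
      rw [Finset.sum_congr rfl (fun i _ => h1 i), Finset.sum_update_of_mem (Finset.mem_univ _),
        Finset.erase_eq]
    have hmsplit : m = (𝒜 i₀).card + ∑ i ∈ Finset.univ.erase i₀, (𝒜 i).card := by
      rw [← hm, ← Finset.add_sum_erase Finset.univ _ (Finset.mem_univ i₀)]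
    have hm₁ : (∑ i, (𝒜₁ i).card) < m := by
      rw [h𝒜₁, hsum]; simp; omega
    have hm₂ : (∑ i, (𝒜₂ i).card) < m := by
      rw [h𝒜₂, hsum, Finset.card_erase_of_mem hB]; omega
    have hne₁ : ∀ i, (𝒜₁ i).Nonempty := by
      intro i
      rw [h𝒜₁]
      by_cases hi : i = i₀
      · subst hi; simp
      · rw [Function.update_of_ne hi]; exact hne i
    have hne₂ : ∀ i, (𝒜₂ i).Nonempty := by
      intro i
      rw [h𝒜₂]
      by_cases hi : i = i₀
      · subst hi
        rw [Function.update_self, ← Finset.card_pos, Finset.card_erase_of_mem hB]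
        omega
      · rw [Function.update_of_ne hi]; exact hne i
    obtain ⟨c₂, hc₂0, hc₂1, C₂, hC₂0, hrec₁⟩ := IH _ hm₁ 𝒜₁ rfl hne₁
    obtain ⟨c₃, hc₃0, hc₃1, C₃, hC₃0, hrec₂⟩ := IH _ hm₂ 𝒜₂ rfl hne₂
    refine ⟨c₁ * c₂ * c₃, by positivity, ?_, C₁ + C₂ + C₃, by positivity, ?_⟩
    · have h12 : c₁ * c₂ ≤ 1 := by nlinarith
      nlinarith
    intro A hcov F hind
    set C' : Set X := ⋃₀ ↑((𝒜 i₀).erase B) with hC'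
    have hBC : A i₀ ⊆ B ∪ C' := by
      refine (hcov i₀).trans ?_
      have : (𝒜 i₀ : Set (Set X)) = insert B ↑((𝒜 i₀).erase B) := by
        rw [← Finset.coe_insert, Finset.insert_erase hB]
      rw [this, Set.sUnion_insert]
    obtain ⟨D, hD, F₁, hF₁sub, hF₁card, hF₁ind⟩ := hsplit A i₀ B C' hBC F hind
    have hFnonneg : (0:ℝ) ≤ (F.card : ℝ) := by positivity
    have hF₁nonneg : (0:ℝ) ≤ (F₁.card : ℝ) := by positivity
    rcases hD with hD | hD
    · -- D = B
      rw [hD] at hF₁ind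
      have hcov₁ : ∀ i, Function.update A i₀ B i ⊆ ⋃₀ ↑(𝒜₁ i) := by
        intro i
        by_cases hi : i = i₀
        · subst hi
          rw [Function.update_self, h𝒜₁, Function.update_self]
          simp
        · rw [Function.update_of_ne hi, h𝒜₁, Function.update_of_ne hi]
          exact hcov i
      obtain ⟨A', hA'mem, F', hF'sub, hF'card, hF'ind⟩ :=
        hrec₁ (Function.update A i₀ B) hcov₁ F₁ hF₁ind
      refine ⟨A', ?_, F', hF'sub.trans hF₁sub, ?_, hF'ind⟩
      · intro i
        have := hA'mem i
        rw [h𝒜₁] at this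
        by_cases hi : i = i₀
        · subst hi
          rw [Function.update_self] at this
          rw [Finset.mem_singleton] at this
          rw [this]; exact hB
        · rwa [Function.update_of_ne hi] at this
      · have h1 : c₂ * (F₁.card : ℝ) - C₂ ≤ F'.card := hF'card
        have h2 : c₂ * (c₁ * (F.card:ℝ) - C₁) ≤ c₂ * (F₁.card:ℝ) :=
          mul_le_mul_of_nonneg_left hF₁card hc₂0.le
        have h3 : c₂ * C₁ ≤ C₁ := by nlinarith
        have h4 : c₁ * c₂ * c₃ * (F.card:ℝ) ≤ c₁ * c₂ * (F.card:ℝ) := by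
          have hnn : (0:ℝ) ≤ c₁ * c₂ * (F.card:ℝ) :=
            mul_nonneg (mul_nonneg hc₁0.le hc₂0.le) hFnonneg
          calc c₁ * c₂ * c₃ * (F.card:ℝ) = c₃ * (c₁ * c₂ * (F.card:ℝ)) := by ring
          _ ≤ 1 * (c₁ * c₂ * (F.card:ℝ)) := mul_le_mul_of_nonneg_right hc₃1 hnn
          _ = _ := one_mul _
        nlinarith [h1, h2, h3, h4]
    · -- D = C'
      rw [hD] at hF₁ind
      have hcov₂ : ∀ i, Function.update A i₀ C' i ⊆ ⋃₀ ↑(𝒜₂ i) := by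
        intro i
        by_cases hi : i = i₀
        · subst hi
          rw [Function.update_self, h𝒜₂, Function.update_self, hC']
        · rw [Function.update_of_ne hi, h𝒜₂, Function.update_of_ne hi]
          exact hcov i
      obtain ⟨A', hA'mem, F', hF'sub, hF'card, hF'ind⟩ :=
        hrec₂ (Function.update A i₀ C') hcov₂ F₁ hF₁ind
      refine ⟨A', ?_, F', hF'sub.trans hF₁sub, ?_, hF'ind⟩
      · intro i
        have := hA'mem i
        rw [h𝒜₂] at this
        by_cases hi : i = i₀
        · subst hi
          rw [Function.update_self] at this
          exact Finset.mem_of_mem_erase this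
        · rwa [Function.update_of_ne hi] at this
      · have h1 : c₃ * (F₁.card : ℝ) - C₃ ≤ F'.card := hF'card
        have h2 : c₃ * (c₁ * (F.card:ℝ) - C₁) ≤ c₃ * (F₁.card:ℝ) :=
          mul_le_mul_of_nonneg_left hF₁card hc₃0.le
        have h3 : c₃ * C₁ ≤ C₁ := by nlinarith
        have h4 : c₁ * c₂ * c₃ * (F.card:ℝ) ≤ c₁ * c₃ * (F.card:ℝ) := by
          have hnn : (0:ℝ) ≤ c₁ * c₃ * (F.card:ℝ) :=
            mul_nonneg (mul_nonneg hc₁0.le hc₃0.le) hFnonneg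
          calc c₁ * c₂ * c₃ * (F.card:ℝ) = c₂ * (c₁ * c₃ * (F.card:ℝ)) := by ring
          _ ≤ 1 * (c₁ * c₃ * (F.card:ℝ)) := mul_le_mul_of_nonneg_right hc₂1 hnn
          _ = _ := one_mul _
        nlinarith [h1, h2, h3, h4]



/-- If the tuple `(A 1, …, A k)` has an independence set of positive density,
and each `A i` is covered by a finite collection `𝒜 i`, then one may choose
`A' i ∈ 𝒜 i` so that `(A' 1, …, A' k)` has an independence set of positive
density. -/
theorem indep_tuple_refine {X : Type*} [MetricSpace X] [CompactSpace X]
    (f : X ≃ₜ X) {k : ℕ} (A : Fin k → Set X)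
    (h : ∃ I : Set ℕ, 0 < lowerDensity I ∧ IsTupleIndepSet (f : X → X) A I)
    (𝒜 : Fin k → Set (Set X)) (hfin : ∀ i, (𝒜 i).Finite)
    (hcov : ∀ i, A i ⊆ ⋃₀ 𝒜 i) :
    ∃ A' : Fin k → Set X, (∀ i, A' i ∈ 𝒜 i) ∧
      ∃ I : Set ℕ, 0 < lowerDensity I ∧ IsTupleIndepSet (f : X → X) A' I := by
  obtain ⟨I, hIpos, hIind⟩ := h
  rcases Nat.eq_zero_or_pos k with hk0 | hk
  · subst hk0
    refine ⟨fun i => i.elim0, fun i => i.elim0, I, hIpos, ?_⟩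
    intro J hJ s
    exact (s 0).elim0
  -- k ≥ 1
  -- I is nonempty, so each A i is nonempty, so each 𝒜 i is nonempty
  have hIne : I.Nonempty := by
    obtain ⟨d, hd0, hdev⟩ := ITR_exists_density_lb hIpos
    obtain ⟨m, hm1, hm2⟩ := (hdev.and (Filter.eventually_ge_atTop ⌈1/d⌉₊)).exists
    have hdm : (1:ℝ) ≤ d * m := by
      have h3 : (1/d : ℝ) ≤ (m:ℝ) := by
        have := Nat.le_ceil (1/d)
        have h4 : ((⌈(1/d : ℝ)⌉₊ : ℕ) : ℝ) ≤ m := by exact_mod_cast hm2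
        linarith
      rw [div_le_iff₀ hd0] at h3
      linarith
    have hpos : 0 < ((Finset.Icc 1 m).filter (fun x => x ∈ I)).card := by
      by_contra hcon
      push_neg at hcon
      have h5 : ((Finset.Icc 1 m).filter (fun x => x ∈ I)).card = 0 := by omega
      rw [h5] at hm1
      simp at hm1
      linarith
    obtain ⟨x, hx⟩ := Finset.card_pos.mp hpos
    exact ⟨x, (Finset.mem_filter.mp hx).2⟩
  obtain ⟨j₀, hj₀⟩ := hIne
  set 𝒜F : Fin k → Finset (Set X) := fun i => (hfin i).toFinset with h𝒜F
  have h𝒜Fne : ∀ i, (𝒜F i).Nonempty := by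
    intro i
    obtain ⟨x, hx⟩ := hIind {j₀} (by simpa using hj₀) (fun _ => i)
    simp only [Set.mem_iInter, Set.mem_preimage, Finset.mem_singleton] at hx
    have hxA : (f : X → X)^[j₀] x ∈ A i := hx j₀ rfl
    obtain ⟨B, hB, -⟩ := hcov i hxA
    exact ⟨B, by rw [h𝒜F]; simpa [Set.Finite.mem_toFinset] using hB⟩
  have h𝒜Fcov : ∀ i, A i ⊆ ⋃₀ ↑(𝒜F i) := by
    intro i
    rw [h𝒜F]
    simpa [Set.Finite.coe_toFinset] using hcov i
  obtain ⟨c, hc0, hc1, C₀, hC₀0, href⟩ :=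
    ITR_refine (f : X → X) hk (∑ i, (𝒜F i).card) 𝒜F rfl h𝒜Fne
  -- the finite independence sets
  set Fn : ℕ → Finset ℕ := fun n => (Finset.Icc 1 n).filter (fun x => x ∈ I) with hFn
  have hFnind : ∀ n, IsTupleIndepSet (f : X → X) A ↑(Fn n) := by
    intro n
    refine ITR_mono hIind ?_
    intro x hx
    rw [hFn] at hx
    simp only [Finset.coe_filter, Set.mem_setOf_eq] at hx
    exact hx.2
  have H1 : ∀ n, ∃ A' : Fin k → Set X, (∀ i, A' i ∈ 𝒜F i) ∧ ∃ F' : Finset ℕ,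
      F' ⊆ Fn n ∧ c * (Fn n).card - C₀ ≤ F'.card ∧ IsTupleIndepSet (f : X → X) A' ↑F' :=
    fun n => href A h𝒜Fcov (Fn n) (hFnind n)
  choose A' hA'mem F' hF'sub hF'card hF'ind using H1
  -- density
  obtain ⟨d, hd0, hdev⟩ := ITR_exists_density_lb hIpos
  set β : ℝ := c * d / 2 with hβ
  have hβ0 : 0 < β := by rw [hβ]; positivity
  have hbig_ev : ∀ᶠ n in Filter.atTop, 1 ≤ n ∧ β * n ≤ ((F' n).card : ℝ) := by
    have h2 : ∀ᶠ n : ℕ in Filter.atTop, C₀ ≤ (c*d/2) * (n:ℝ) := by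
      rw [Filter.eventually_atTop]
      refine ⟨⌈C₀ / (c*d/2)⌉₊, fun n hn => ?_⟩
      have h3 : C₀ / (c*d/2) ≤ (n:ℝ) := by
        have := Nat.le_ceil (C₀ / (c*d/2))
        have h4 : ((⌈C₀ / (c*d/2)⌉₊ : ℕ) : ℝ) ≤ n := by exact_mod_cast hn
        linarith
      rw [div_le_iff₀ (by positivity)] at h3
      linarith [h3]
    filter_upwards [hdev, h2, Filter.eventually_ge_atTop 1] with n hdn hCn h1n
    refine ⟨h1n, ?_⟩
    have hcount : d * n ≤ ((Fn n).card : ℝ) := hdn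
    have h5 := hF'card n
    have h6 : c * (d * n) ≤ c * ((Fn n).card : ℝ) := mul_le_mul_of_nonneg_left hcount hc0.le
    rw [hβ]
    nlinarith
  -- shifted versions
  have H2 : ∀ n : ℕ, ∃ t L : ℕ, (1 ≤ n ∧ β * n ≤ ((F' n).card : ℝ)) →
      (t + L = n + 1 ∧ (β/2/2) * (n+1) ≤ L ∧
        ∀ m : ℕ, m ≤ L → (β/2/2) * m ≤ (((F' n).filter fun x => t ≤ x ∧ x < t + m)).card) := by
    intro n
    by_cases hgood : 1 ≤ n ∧ β * n ≤ ((F' n).card : ℝ)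
    · have hsubr : F' n ⊆ Finset.range (n+1) := by
        intro x hx
        have := hF'sub n hx
        rw [hFn] at this
        simp only [Finset.mem_filter, Finset.mem_Icc] at this
        rw [Finset.mem_range]; omega
      have hcard2 : (β/2) * ((n+1 : ℕ) : ℝ) ≤ ((F' n).card : ℝ) := by
        have h1n : (1:ℝ) ≤ n := by exact_mod_cast hgood.1
        push_cast
        nlinarith [hgood.2]
      obtain ⟨t, L, ht1, ht2, ht3⟩ :=
        ITR_shift_dense (β/2) (by positivity) (n+1) (F' n) hsubr hcard2
      exact ⟨t, L, fun _ => ⟨ht1, by push_cast at ht2 ⊢; linarith, ht3⟩⟩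
    · exact ⟨0, 0, fun hcon => absurd hcon hgood⟩
  choose tt LL hTL using H2
  set V : ℕ → Finset ℕ := fun n => ((F' n).filter (fun x => tt n ≤ x)).image (fun x => x - tt n)
    with hV
  have hVind : ∀ n, IsTupleIndepSet (f : X → X) (A' n) ↑(V n) :=
    fun n => ITR_shift (hF'ind n) (tt n)
  -- pigeonhole via an ultrafilter
  obtain ⟨U, hU⟩ := Ultrafilter.exists_le (Filter.atTop : Filter ℕ)
  set Cand := ∀ i : Fin k, {B : Set X // B ∈ 𝒜F i} with hCand
  set μ : ℕ → Cand := fun n i => ⟨A' n i, hA'mem n i⟩ with hμ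
  have hfiber : ∃ cs : Cand, {n | μ n = cs} ∈ U := by
    by_contra hcon
    push_neg at hcon
    have hcompl : ∀ cs : Cand, {n | μ n = cs}ᶜ ∈ U := by
      intro cs
      rw [Ultrafilter.compl_mem_iff_notMem]
      exact hcon cs
    have hint : (⋂ cs : Cand, {n | μ n = cs}ᶜ) ∈ U := by
      exact Filter.iInter_mem.mpr hcompl
    have hempty : (⋂ cs : Cand, {n | μ n = cs}ᶜ) = ∅ := by
      ext n
      simp only [Set.mem_iInter, Set.mem_compl_iff, Set.mem_setOf_eq, Set.mem_empty_iff_false,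
        iff_false, not_forall, not_not]
      exact ⟨μ n, rfl⟩
    rw [hempty] at hint
    exact Filter.empty_notMem _ hint
  obtain ⟨cs, hcs⟩ := hfiber
  set Astar : Fin k → Set X := fun i => (cs i : Set X) with hAstar
  have hAstar_mem : ∀ i, Astar i ∈ 𝒜 i := by
    intro i
    rw [hAstar]
    have := (cs i).2
    simp only [h𝒜F, Set.Finite.mem_toFinset] at this
    exact this
  have hAeq : ∀ n, μ n = cs → A' n = Astar := by
    intro n hn
    funext i
    have := congrFun hn i
    rw [hμ] at this
    exact congrArg Subtype.val this
  -- the limit set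
  set I' : Set ℕ := {m : ℕ | {n : ℕ | m ∈ V n} ∈ U} with hI'
  have hagree : ∀ M : ℕ, {n : ℕ | ∀ m < M, (m ∈ I' ↔ m ∈ V n)} ∈ U := by
    intro M
    have h1 : {n : ℕ | ∀ m < M, (m ∈ I' ↔ m ∈ V n)}
        = ⋂ m ∈ Finset.range M, {n : ℕ | m ∈ I' ↔ m ∈ V n} := by
      ext n
      simp only [Set.mem_iInter, Set.mem_setOf_eq, Finset.mem_range]
    rw [h1]
    refine (Filter.biInter_finset_mem (Finset.range M)).mpr ?_
    intro m _
    by_cases hm : m ∈ I'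
    · have hm2 : {n : ℕ | m ∈ V n} ∈ U := hm
      refine Filter.mem_of_superset hm2 ?_
      intro n hn
      simp only [Set.mem_setOf_eq] at hn ⊢
      exact ⟨fun _ => hn, fun _ => hm⟩
    · have hm2 : {n : ℕ | m ∈ V n}ᶜ ∈ U := by
        rw [Ultrafilter.compl_mem_iff_notMem]
        exact hm
      refine Filter.mem_of_superset hm2 ?_
      intro n hn
      simp only [Set.mem_compl_iff, Set.mem_setOf_eq] at hn ⊢
      exact ⟨fun hcon => absurd hcon hm, fun hcon => absurd hcon hn⟩
  set Sgood : Set ℕ := {n : ℕ | (1 ≤ n ∧ β * n ≤ ((F' n).card : ℝ)) ∧ μ n = cs} with hSgood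
  have hSgoodU : Sgood ∈ U := by
    have h1 : {n : ℕ | 1 ≤ n ∧ β * n ≤ ((F' n).card : ℝ)} ∈ U := hU hbig_ev
    exact Filter.inter_mem h1 hcs
  -- counting bound for I'
  have hcountI' : ∀ m : ℕ, (β/2/2) * (m+1) ≤ (((Finset.range (m+1)).filter (fun x => x ∈ I')).card : ℝ) := by
    intro m
    have hthr : {n : ℕ | ((m+1 : ℕ) : ℝ) ≤ (β/2/2) * n} ∈ U := by
      refine hU ?_
      have hev : ∀ᶠ n : ℕ in Filter.atTop, ((m+1 : ℕ) : ℝ) ≤ (β/2/2) * (n:ℝ) := by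
        rw [Filter.eventually_atTop]
        refine ⟨⌈((m+1 : ℕ) : ℝ) / (β/2/2)⌉₊, fun n hn => ?_⟩
        have h3 : ((m+1 : ℕ) : ℝ) / (β/2/2) ≤ (n:ℝ) := by
          have := Nat.le_ceil (((m+1 : ℕ) : ℝ) / (β/2/2))
          have h4 : ((⌈((m+1 : ℕ):ℝ) / (β/2/2)⌉₊ : ℕ) : ℝ) ≤ n := by exact_mod_cast hn
          linarith
        rw [div_le_iff₀ (by positivity)] at h3
        linarith
      exact hev
    obtain ⟨n, hnag, hnthr, hngood⟩ :=
      Filter.nonempty_of_mem (Filter.inter_mem (hagree (m+1)) (Filter.inter_mem hthr hSgoodU))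
    obtain ⟨hTL1, hTL2, hTL3⟩ := hTL n hngood.1
    -- m + 1 ≤ LL n
    have hmL : m + 1 ≤ LL n := by
      have h5 : ((m+1 : ℕ) : ℝ) ≤ (β/2/2) * n := hnthr
      have h6 : (β/2/2) * ((n:ℝ)+1) ≤ LL n := hTL2
      have h7 : ((m+1 : ℕ) : ℝ) ≤ LL n := by nlinarith [hβ0]
      exact_mod_cast h7
    have hcnt := hTL3 (m+1) hmL
    -- transfer counts
    have heq1 : (Finset.range (m+1)).filter (fun x => x ∈ I')
        = (V n).filter (fun x => x < m + 1) := by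
      ext x
      simp only [Finset.mem_filter, Finset.mem_range]
      constructor
      · rintro ⟨hx1, hx2⟩
        have := (hnag x hx1).mp hx2
        exact ⟨this, hx1⟩
      · rintro ⟨hx1, hx2⟩
        exact ⟨hx2, (hnag x hx2).mpr hx1⟩
    have heq2 := ITR_shift_count (F' n) (tt n) (m+1)
    rw [heq1]
    rw [hV]
    simp only
    rw [heq2]
    push_cast at hcnt ⊢
    linarith
  -- conclusion
  refine ⟨Astar, hAstar_mem, I', ?_, ?_⟩
  · refine ITR_density_lb_of_counts (β/2/2) (by positivity) ?_
    intro m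
    have h1 := hcountI' m
    have h2 : (((Finset.range (m+1)).filter (fun x => x ∈ I')).card : ℝ)
        ≤ (((Finset.Icc 1 m).filter (fun x => x ∈ I')).card : ℝ) + 1 := by
      have hins : Finset.range (m+1) = insert 0 (Finset.Icc 1 m) := by
        ext x
        simp only [Finset.mem_range, Finset.mem_insert, Finset.mem_Icc]
        omega
      rw [hins, Finset.filter_insert]
      by_cases h0 : (0:ℕ) ∈ I'
      · rw [if_pos h0]
        have := Finset.card_insert_le 0 ((Finset.Icc 1 m).filter (fun x => x ∈ I'))
        exact_mod_cast this
      · rw [if_neg h0]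
        push_cast
        linarith
    push_cast at h1
    linarith
  · intro J hJ s
    set M : ℕ := (J.sup id) + 1 with hM
    obtain ⟨n, hnag, hngood⟩ :=
      Filter.nonempty_of_mem (Filter.inter_mem (hagree M) hSgoodU)
    have hJV : (J : Set ℕ) ⊆ ↑(V n) := by
      intro j hj
      have hjI' : j ∈ I' := hJ hj
      have hjM : j < M := by
        rw [hM]
        have : j ≤ J.sup id := Finset.le_sup (f := id) hj
        omega
      exact (hnag j hjM).mp hjI'
    have hind := hVind n
    rw [hAeq n hngood.2] at hind
    exact hind J hJV s
end

section
/- Let X be a continuum and f : X → X a continuous monotone surjection. If X is hereditarily unicoherent and the inverse limit space lim←(X, f) contains an indecomposable continuum, then X contains an indecomposable continuum. -/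
open Set Filter Topology

/-- A decreasing intersection of compact connected nonempty sets in a T2 space
is preconnected. -/
lemma isPreconnected_iInter_seq {Y : Type*} [TopologicalSpace Y] [T2Space Y]
    {A : ℕ → Set Y} (hcomp : ∀ n, IsCompact (A n))
    (hconn : ∀ n, IsPreconnected (A n)) (hdec : ∀ n, A (n + 1) ⊆ A n) :
    IsPreconnected (⋂ n, A n) := by
  intro U V hU hV hUV hUne hVne
  by_contra hempty
  rw [Set.not_nonempty_iff_eq_empty] at hempty
  set C := ⋂ n, A n with hC
  have hCcl : IsClosed C := isClosed_iInter fun n => (hcomp n).isClosed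
  have hCU : C \ V = C ∩ U := by
    apply Subset.antisymm
    · rintro x ⟨hx, hxv⟩
      exact ⟨hx, (hUV hx).resolve_right hxv⟩
    · rintro x ⟨hx, hxu⟩
      refine ⟨hx, fun hxv => ?_⟩
      have : x ∈ C ∩ (U ∩ V) := ⟨hx, hxu, hxv⟩
      rw [hempty] at this; exact this
  have hCV : C \ U = C ∩ V := by
    apply Subset.antisymm
    · rintro x ⟨hx, hxu⟩
      exact ⟨hx, (hUV hx).resolve_left hxu⟩
    · rintro x ⟨hx, hxv⟩
      refine ⟨hx, fun hxu => ?_⟩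
      have : x ∈ C ∩ (U ∩ V) := ⟨hx, hxu, hxv⟩
      rw [hempty] at this; exact this
  have hCcomp : IsCompact C := (hcomp 0).of_isClosed_subset hCcl (iInter_subset A 0)
  have h1 : IsCompact (C \ V) := hCcomp.diff hV
  have h2 : IsCompact (C \ U) := hCcomp.diff hU
  have hdisj : Disjoint (C \ V) (C \ U) := by
    rw [Set.disjoint_left]
    rintro x ⟨hx, hxv⟩ ⟨_, hxu⟩
    exact (hUV hx).elim hxu hxv
  obtain ⟨U', V', hU', hV', hsU', hsV', hdisj'⟩ :=
    SeparatedNhds.of_isCompact_isCompact h1 h2 hdisj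
  have hCsub : C ⊆ U' ∪ V' := by
    intro x hx
    rcases hUV hx with h | h
    · exact Or.inl (hsU' ⟨hx, fun hv => by
        have : x ∈ C ∩ (U ∩ V) := ⟨hx, h, hv⟩
        rw [hempty] at this; exact this⟩)
    · exact Or.inr (hsV' ⟨hx, fun hu => by
        have : x ∈ C ∩ (U ∩ V) := ⟨hx, hu, h⟩
        rw [hempty] at this; exact this⟩)
  -- find n with A n ⊆ U' ∪ V'
  have hAdec : ∀ m n, m ≤ n → A n ⊆ A m := by
    intro m n hmn
    induction n with
    | zero => simpa [Nat.le_zero.mp hmn]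
    | succ k ih =>
      rcases Nat.lt_or_ge m (k+1) with h | h
      · exact (hdec k).trans (ih (Nat.lt_succ_iff.mp h))
      · have : m = k + 1 := le_antisymm hmn h
        simp [this]
  have hexists : ∃ n, A n ⊆ U' ∪ V' := by
    by_contra hno
    push_neg at hno
    have hBne : ∀ n, (A n \ (U' ∪ V')).Nonempty := by
      intro n
      rcases Set.not_subset.mp (hno n) with ⟨x, hxA, hxUV⟩
      exact ⟨x, hxA, hxUV⟩
    have := IsCompact.nonempty_iInter_of_sequence_nonempty_isCompact_isClosed
      (fun n => A n \ (U' ∪ V'))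
      (fun n => diff_subset_diff_left (hdec n))
      hBne ((hcomp 0).diff (hU'.union hV'))
      (fun n => (hcomp n).isClosed.sdiff (hU'.union hV'))
    obtain ⟨x, hx⟩ := this
    simp only [mem_iInter, mem_diff] at hx
    have hxC : x ∈ C := mem_iInter.mpr fun n => (hx n).1
    exact (hx 0).2 (hCsub hxC)
  obtain ⟨n, hn⟩ := hexists
  obtain ⟨xu, hxu⟩ := hUne
  obtain ⟨xv, hxv⟩ := hVne
  have hxu' : xu ∈ A n ∩ U' := ⟨(iInter_subset A n) hxu.1, hsU' (hCU ▸ ⟨hxu.1, hxu.2⟩ : xu ∈ C \ V)⟩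
  have hxv' : xv ∈ A n ∩ V' := ⟨(iInter_subset A n) hxv.1, hsV' (hCV ▸ ⟨hxv.1, hxv.2⟩ : xv ∈ C \ U)⟩
  obtain ⟨z, hz⟩ := hconn n U' V' hU' hV' hn ⟨xu, hxu'⟩ ⟨xv, hxv'⟩
  exact (hdisj'.ne_of_mem hz.2.1 hz.2.2) rfl


/-- The preimage of a preconnected set under a continuous monotone surjection
(on a compact Hausdorff space) is preconnected. -/
lemma monotone_preimage_preconnected {X : Type*} [TopologicalSpace X]
    [CompactSpace X] [T2Space X] {f : X → X} (hc : Continuous f)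
    (hs : Function.Surjective f)
    (hmono : ∀ x : X, IsPreconnected (f ⁻¹' {x}))
    {S : Set X} (hS : IsPreconnected S) :
    IsPreconnected (f ⁻¹' S) := by
  intro U V hU hV hUV hUne hVne
  by_contra hempty
  rw [Set.not_nonempty_iff_eq_empty] at hempty
  set WU := (f '' Uᶜ)ᶜ with hWU
  set WV := (f '' Vᶜ)ᶜ with hWV
  have hWUopen : IsOpen WU := (hc.isClosedMap _ hU.isClosed_compl).isOpen_compl
  have hWVopen : IsOpen WV := (hc.isClosedMap _ hV.isClosed_compl).isOpen_compl
  have hWUmem : ∀ y, y ∈ WU ↔ f ⁻¹' {y} ⊆ U := by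
    intro y
    simp only [hWU, mem_compl_iff, mem_image, not_exists, not_and]
    constructor
    · intro h x hx
      by_contra hxu
      exact h x hxu hx
    · intro h x hxu hfx
      exact hxu (h hfx)
  have hWVmem : ∀ y, y ∈ WV ↔ f ⁻¹' {y} ⊆ V := by
    intro y
    simp only [hWV, mem_compl_iff, mem_image, not_exists, not_and]
    constructor
    · intro h x hx
      by_contra hxv
      exact h x hxv hx
    · intro h x hxv hfx
      exact hxv (h hfx)
  have hfibdichot : ∀ y ∈ S, f ⁻¹' {y} ⊆ U ∨ f ⁻¹' {y} ⊆ V := by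
    intro y hy
    have hfibsub : f ⁻¹' {y} ⊆ f ⁻¹' S := fun x hx => by
      simp only [mem_preimage, mem_singleton_iff] at hx; simp [mem_preimage, hx, hy]
    have hcov : f ⁻¹' {y} ⊆ U ∪ V := hfibsub.trans hUV
    by_contra hnot
    push_neg at hnot
    obtain ⟨xu, hxuf, hxuU⟩ := Set.not_subset.mp hnot.1
    obtain ⟨xv, hxvf, hxvV⟩ := Set.not_subset.mp hnot.2
    have hxuV : xu ∈ V := (hcov hxuf).resolve_left hxuU
    have hxvU : xv ∈ U := (hcov hxvf).resolve_right hxvV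
    obtain ⟨z, hz⟩ := hmono y U V hU hV hcov ⟨xv, hxvf, hxvU⟩ ⟨xu, hxuf, hxuV⟩
    have : z ∈ f ⁻¹' S ∩ (U ∩ V) := ⟨hfibsub hz.1, hz.2⟩
    rw [hempty] at this; exact this
  have hScov : S ⊆ WU ∪ WV := by
    intro y hy
    rcases hfibdichot y hy with h | h
    · exact Or.inl ((hWUmem y).mpr h)
    · exact Or.inr ((hWVmem y).mpr h)
  obtain ⟨pu, hpuS, hpuU⟩ := hUne
  obtain ⟨pv, hpvS, hpvV⟩ := hVne
  have hfpu : f pu ∈ S ∩ WU := by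
    refine ⟨hpuS, ?_⟩
    rcases hfibdichot (f pu) hpuS with h | h
    · exact (hWUmem _).mpr h
    · exfalso
      have : pu ∈ f ⁻¹' S ∩ (U ∩ V) := ⟨hpuS, hpuU, h rfl⟩
      rw [hempty] at this; exact this
  have hfpv : f pv ∈ S ∩ WV := by
    refine ⟨hpvS, ?_⟩
    rcases hfibdichot (f pv) hpvS with h | h
    · exfalso
      have : pv ∈ f ⁻¹' S ∩ (U ∩ V) := ⟨hpvS, h rfl, hpvV⟩
      rw [hempty] at this; exact this
    · exact (hWVmem _).mpr h
  obtain ⟨y, hyS, hyU, hyV⟩ := hS WU WV hWUopen hWVopen hScov ⟨_, hfpu⟩ ⟨_, hfpv⟩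
  obtain ⟨x, hx⟩ := hs y
  have : x ∈ f ⁻¹' S ∩ (U ∩ V) := by
    have hxf : x ∈ f ⁻¹' {y} := by simp [mem_preimage, hx]
    exact ⟨by simp [mem_preimage, hx, hyS], (hWUmem y).mp hyU hxf, (hWVmem y).mp hyV hxf⟩
  rw [hempty] at this; exact this

lemma monotone_iterate_preimage_preconnected {X : Type*} [TopologicalSpace X]
    [CompactSpace X] [T2Space X] {f : X → X} (hc : Continuous f)
    (hs : Function.Surjective f)
    (hmono : ∀ x : X, IsPreconnected (f ⁻¹' {x}))
    {S : Set X} (hS : IsPreconnected S) (n : ℕ) : IsPreconnected (f^[n] ⁻¹' S) := by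
  induction n with
  | zero => simpa using hS
  | succ k ih =>
    rw [Function.iterate_succ, Set.preimage_comp]
    exact monotone_preimage_preconnected hc hs hmono ih

/-- Chain computation: along an inverse-limit chain, earlier coordinates are
iterates of later ones. -/
lemma chain_iterate {X : Type*} {f : X → X} {x : ℕ → X} {m : ℕ}
    (h : ∀ j, j < m → f (x (j + 1)) = x j) :
    ∀ k j, j + k ≤ m → f^[k] (x (j + k)) = x j := by
  intro k
  induction k with
  | zero => intro j _; simp
  | succ l ih =>
    intro j hjl
    have h1 : f (x (j + l + 1)) = x (j + l) := h (j + l) (by omega)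
    show f^[l + 1] (x (j + l + 1)) = x j
    rw [Function.iterate_succ_apply, h1]
    exact ih j (by omega)

section Cyl
variable {X : Type*} [MetricSpace X] [CompactSpace X] [ConnectedSpace X]

/-- The set of inverse-limit chains whose `i`-th coordinate lies in a
subcontinuum `S` is compact. -/
lemma cylinder_isCompact {f : X → X} (hc : Continuous f) {S : Set X}
    (hScomp : IsCompact S) (i : ℕ) :
    IsCompact {x : ℕ → X | (∀ j, f (x (j + 1)) = x j) ∧ x i ∈ S} := by
  have hclosed : IsClosed {x : ℕ → X | (∀ j, f (x (j + 1)) = x j) ∧ x i ∈ S} := by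
    have h1 : IsClosed {x : ℕ → X | ∀ j, f (x (j + 1)) = x j} := by
      have : {x : ℕ → X | ∀ j, f (x (j + 1)) = x j} =
          ⋂ j, {x : ℕ → X | f (x (j + 1)) = x j} := by
        ext x; simp
      rw [this]
      exact isClosed_iInter fun j =>
        isClosed_eq (hc.comp (continuous_apply (j + 1))) (continuous_apply j)
    have h2 : IsClosed {x : ℕ → X | x i ∈ S} :=
      hScomp.isClosed.preimage (continuous_apply i)
    exact h1.inter h2
  exact hclosed.isCompact

/-- The cylinder over a subcontinuum is preconnected. -/
lemma cylinder_isPreconnected {f : X → X} (hc : Continuous f)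
    (hs : Function.Surjective f)
    (hmono : ∀ x : X, IsPreconnected (f ⁻¹' {x}))
    {S : Set X} (hScomp : IsCompact S) (hSconn : IsPreconnected S)
    (hSne : S.Nonempty) (i : ℕ) :
    IsPreconnected {x : ℕ → X | (∀ j, f (x (j + 1)) = x j) ∧ x i ∈ S} := by
  set A : ℕ → Set (ℕ → X) := fun n =>
    {x : ℕ → X | (∀ j, j < i + n → f (x (j + 1)) = x j) ∧ x i ∈ S} with hA
  have hiter : ∀ n, Continuous (f^[n]) := fun n => hc.iterate n
  -- each A n is the image of a connected set
  have himg : ∀ n, A n = (fun p : X × (ℕ → X) => fun j =>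
      if j ≤ i + n then f^[i + n - j] p.1 else p.2 j) ''
      ((f^[n] ⁻¹' S) ×ˢ (univ : Set (ℕ → X))) := by
    intro n
    ext x
    constructor
    · rintro ⟨hchain, hxi⟩
      refine ⟨⟨x (i + n), x⟩, ⟨?_, trivial⟩, ?_⟩
      · have := chain_iterate hchain n i (le_refl _)
        simpa [mem_preimage, this] using hxi
      · funext j
        by_cases hj : j ≤ i + n
        · simp only [hj, if_pos]
          have := chain_iterate hchain (i + n - j) j (by omega)
          rw [show j + (i + n - j) = i + n by omega] at this
          exact this
        · simp [hj]
    · rintro ⟨⟨t, z⟩, ⟨ht, -⟩, rfl⟩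
      constructor
      · intro j hj
        simp only [show j + 1 ≤ i + n by omega, if_pos, show j ≤ i + n by omega]
        rw [show i + n - j = (i + n - (j + 1)) + 1 by omega,
          Function.iterate_succ_apply']
      · simp only [show i ≤ i + n by omega, if_pos, show i + n - i = n by omega]
        exact ht
  have hAconn : ∀ n, IsPreconnected (A n) := by
    intro n
    rw [himg n]
    apply IsPreconnected.image
    · exact (monotone_iterate_preimage_preconnected hc hs hmono hSconn n).prod
        isPreconnected_univ
    · apply Continuous.continuousOn
      apply continuous_pi
      intro j
      by_cases hj : j ≤ i + n
      · simp only [hj, if_pos]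
        exact (hiter _).comp continuous_fst
      · simp only [hj, if_neg, if_false]
        exact (continuous_apply j).comp continuous_snd
  have hAcomp : ∀ n, IsCompact (A n) := by
    intro n
    apply IsClosed.isCompact
    have h1 : IsClosed {x : ℕ → X | ∀ j, j < i + n → f (x (j + 1)) = x j} := by
      have : {x : ℕ → X | ∀ j, j < i + n → f (x (j + 1)) = x j} =
          ⋂ j ∈ {j | j < i + n}, {x : ℕ → X | f (x (j + 1)) = x j} := by
        ext x; simp
      rw [this]
      exact isClosed_biInter fun j _ =>
        isClosed_eq (hc.comp (continuous_apply (j + 1))) (continuous_apply j)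
    exact h1.inter (hScomp.isClosed.preimage (continuous_apply i))
  have hAdec : ∀ n, A (n + 1) ⊆ A n := by
    rintro n x ⟨hchain, hxi⟩
    exact ⟨fun j hj => hchain j (by omega), hxi⟩
  have hint : {x : ℕ → X | (∀ j, f (x (j + 1)) = x j) ∧ x i ∈ S} = ⋂ n, A n := by
    ext x
    simp only [mem_iInter, hA, mem_setOf_eq]
    constructor
    · rintro ⟨hch, hxi⟩ n
      exact ⟨fun j _ => hch j, hxi⟩
    · intro h
      refine ⟨fun j => (h (j + 1)).1 j (by omega), (h 0).2⟩
  rw [hint]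
  exact isPreconnected_iInter_seq hAcomp hAconn hAdec

/-- The cylinder over a nonempty set is nonempty. -/
lemma cylinder_nonempty {f : X → X} (hs : Function.Surjective f) {S : Set X}
    (hSne : S.Nonempty) (i : ℕ) :
    {x : ℕ → X | (∀ j, f (x (j + 1)) = x j) ∧ x i ∈ S}.Nonempty := by
  obtain ⟨s, hsS⟩ := hSne
  -- build a chain through s at coordinate i
  have hchoice : ∀ y : X, ∃ z : X, f z = y := hs
  choose g hg using hchoice
  refine ⟨fun j => if j ≤ i then f^[i - j] s else g^[j - i] s, ?_, ?_⟩
  · intro j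
    by_cases hj : j + 1 ≤ i
    · simp only [hj, if_pos, show j ≤ i by omega]
      rw [show i - j = (i - (j + 1)) + 1 by omega, Function.iterate_succ_apply']
    · by_cases hj2 : j + 1 = i + 1
      · have hji : j = i := by omega
        simp only [hj, if_neg, hji, if_pos, le_refl, if_true]
        simp [show i + 1 - i = 1 by omega, show i - i = 0 by omega, hg]
      · have h2 : ¬ (j ≤ i) := by omega
        simp only [if_neg hj, if_neg h2]
        rw [show j + 1 - i = (j - i) + 1 by omega, Function.iterate_succ_apply', hg]
  · simp [hsS]

end Cyl

/-- A subcontinuum: a nonempty compact connected subset. -/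
def IsSubcontinuum {X : Type*} [TopologicalSpace X] (M : Set X) : Prop :=
  IsCompact M ∧ IsConnected M

/-- An indecomposable continuum: a nondegenerate subcontinuum which is not the
union of two proper subcontinua. -/
def IsIndecomposable {X : Type*} [TopologicalSpace X] (M : Set X) : Prop :=
  IsSubcontinuum M ∧ (∃ a ∈ M, ∃ b ∈ M, a ≠ b) ∧
    ¬∃ H K : Set X, IsSubcontinuum H ∧ IsSubcontinuum K ∧
      H ⊆ M ∧ K ⊆ M ∧ H ≠ M ∧ K ≠ M ∧ H ∪ K = M

section Final
variable {X : Type*} [MetricSpace X] [CompactSpace X] [ConnectedSpace X]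

/-- A compact subset of the inverse limit is determined by its projections. -/
lemma mem_of_forall_proj {f : X → X} {T : Set (ℕ → X)}
    (hTL : T ⊆ {x : ℕ → X | ∀ j, f (x (j + 1)) = x j}) (hTcomp : IsCompact T)
    {x : ℕ → X} (hx : ∀ j, f (x (j + 1)) = x j)
    (hproj : ∀ n, x n ∈ (fun y => y n) '' T) : x ∈ T := by
  choose h hhT hhx using hproj
  have hkey : ∀ j n, j ≤ n → h n j = x j := by
    intro j n hjn
    have h1 : f^[n - j] (h n (j + (n - j))) = h n j :=
      chain_iterate (m := n) (fun j' _ => hTL (hhT n) j') (n - j) j (by omega)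
    have h2 : f^[n - j] (x (j + (n - j))) = x j :=
      chain_iterate (m := n) (fun j' _ => hx j') (n - j) j (by omega)
    rw [show j + (n - j) = n by omega] at h1 h2
    rw [← h1, ← h2]
    exact congrArg (f^[n - j]) (hhx n)
  have htend : Filter.Tendsto h Filter.atTop (nhds x) := by
    rw [tendsto_pi_nhds]
    intro j
    apply Filter.Tendsto.congr' _ tendsto_const_nhds
    filter_upwards [Filter.eventually_ge_atTop j] with n hn
    exact (hkey j n hn).symm
  exact hTcomp.isClosed.mem_of_tendsto htend (Filter.Eventually.of_forall hhT)

/-- Hereditary unicoherence lifts to subcontinua of the inverse limit. -/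
lemma interL_isPreconnected {f : X → X} (hc : Continuous f)
    (hs : Function.Surjective f)
    (hmono : ∀ x : X, IsPreconnected (f ⁻¹' {x}))
    (hhu : ∀ H K : Set X, IsSubcontinuum H → IsSubcontinuum K →
      IsPreconnected (H ∩ K))
    {H K : Set (ℕ → X)}
    (hHL : H ⊆ {x : ℕ → X | ∀ j, f (x (j + 1)) = x j})
    (hKL : K ⊆ {x : ℕ → X | ∀ j, f (x (j + 1)) = x j})
    (hHcomp : IsCompact H) (hHconn : IsPreconnected H)
    (hKcomp : IsCompact K) (hKconn : IsPreconnected K) :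
    IsPreconnected (H ∩ K) := by
  rcases (H ∩ K).eq_empty_or_nonempty with hHK | hHK
  · rw [hHK]; exact isPreconnected_empty
  obtain ⟨w, hwH, hwK⟩ := hHK
  set C : ℕ → Set X := fun n => (fun y => y n) '' H ∩ (fun y => y n) '' K with hC
  have hCne : ∀ n, (C n).Nonempty := fun n => ⟨w n, ⟨w, hwH, rfl⟩, ⟨w, hwK, rfl⟩⟩
  have hCcomp : ∀ n, IsCompact (C n) :=
    fun n => (hHcomp.image (continuous_apply n)).inter
      (hKcomp.image (continuous_apply n))
  have hCconn : ∀ n, IsPreconnected (C n) := by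
    intro n
    apply hhu
    · exact ⟨hHcomp.image (continuous_apply n),
        ⟨⟨w n, ⟨w, hwH, rfl⟩⟩, hHconn.image _ (continuous_apply n).continuousOn⟩⟩
    · exact ⟨hKcomp.image (continuous_apply n),
        ⟨⟨w n, ⟨w, hwK, rfl⟩⟩, hKconn.image _ (continuous_apply n).continuousOn⟩⟩
  set E : ℕ → Set (ℕ → X) := fun n =>
    {x : ℕ → X | (∀ j, f (x (j + 1)) = x j) ∧ x n ∈ C n} with hE
  have hEdec : ∀ n, E (n + 1) ⊆ E n := by
    rintro n x ⟨hch, hxH, hxK⟩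
    refine ⟨hch, ?_, ?_⟩
    · obtain ⟨h, hhH, hh⟩ := hxH
      exact ⟨h, hhH, by rw [← hch n, ← hh]; exact (hHL hhH n).symm⟩
    · obtain ⟨k, hkK, hk⟩ := hxK
      exact ⟨k, hkK, by rw [← hch n, ← hk]; exact (hKL hkK n).symm⟩
  have hint : H ∩ K = ⋂ n, E n := by
    apply Subset.antisymm
    · rintro x ⟨hxH, hxK⟩
      exact mem_iInter.mpr fun n => ⟨hHL hxH, ⟨x, hxH, rfl⟩, ⟨x, hxK, rfl⟩⟩
    · intro x hx
      rw [mem_iInter] at hx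
      have hch : ∀ j, f (x (j + 1)) = x j := (hx 0).1
      constructor
      · exact mem_of_forall_proj hHL hHcomp hch fun n => (hx n).2.1
      · exact mem_of_forall_proj hKL hKcomp hch fun n => (hx n).2.2
  rw [hint]
  exact isPreconnected_iInter_seq
    (fun n => cylinder_isCompact hc (hCcomp n) n)
    (fun n => cylinder_isPreconnected hc hs hmono (hCcomp n) (hCconn n) (hCne n) n)
    hEdec

end Final

/-- If `X` is a hereditarily unicoherent continuum and `f : X → X` is a
continuous monotone surjection whose inverse limit contains an indecomposable
continuum, then `X` contains an indecomposable continuum. -/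
theorem indecomposable_of_invLim {X : Type*} [MetricSpace X] [CompactSpace X]
    [ConnectedSpace X] (f : X → X) (hc : Continuous f)
    (hs : Function.Surjective f)
    (hmono : ∀ x : X, IsPreconnected (f ⁻¹' {x}))
    (hhu : ∀ H K : Set X, IsSubcontinuum H → IsSubcontinuum K →
      IsPreconnected (H ∩ K))
    (hind : ∃ M : Set (ℕ → X),
      M ⊆ {x : ℕ → X | ∀ i, f (x (i + 1)) = x i} ∧ IsIndecomposable M) :
    ∃ M : Set X, IsIndecomposable M := by
  obtain ⟨M, hML, ⟨hMcomp, hMconn⟩, ⟨a, haM, b, hbM, hab⟩, hMind⟩ := hind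
  obtain ⟨i, hi⟩ : ∃ i, a i ≠ b i := Function.ne_iff.mp hab
  set N : Set X := (fun x : ℕ → X => x i) '' M with hN
  refine ⟨N, ⟨hMcomp.image (continuous_apply i),
    hMconn.image _ (continuous_apply i).continuousOn⟩,
    ⟨a i, ⟨a, haM, rfl⟩, b i, ⟨b, hbM, rfl⟩, hi⟩, ?_⟩
  rintro ⟨H, K, hHsub, hKsub, hHN, hKN, hHne, hKne, hunion⟩
  apply hMind
  -- pull back the decomposition through the (monotone) projection
  have hpull : ∀ S : Set X, IsSubcontinuum S → S ⊆ N →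
      IsSubcontinuum (M ∩ (fun x : ℕ → X => x i) ⁻¹' S) := by
    rintro S ⟨hScomp, hSne, hSconn⟩ hSN
    have hCyl : M ∩ (fun x : ℕ → X => x i) ⁻¹' S =
        M ∩ {x : ℕ → X | (∀ j, f (x (j + 1)) = x j) ∧ x i ∈ S} := by
      ext x
      constructor
      · rintro ⟨hxM, hxS⟩
        exact ⟨hxM, hML hxM, hxS⟩
      · rintro ⟨hxM, _, hxS⟩
        exact ⟨hxM, hxS⟩
    refine ⟨hMcomp.inter_right (hScomp.isClosed.preimage (continuous_apply i)), ?_, ?_⟩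
    · obtain ⟨y, hyS⟩ := hSne
      obtain ⟨m, hmM, hmy⟩ := hSN hyS
      exact ⟨m, hmM, by simp only [Set.mem_preimage, hmy]; exact hyS⟩
    · rw [hCyl]
      exact interL_isPreconnected hc hs hmono hhu hML
        (fun x hx => hx.1) hMcomp hMconn.isPreconnected
        (cylinder_isCompact hc hScomp i)
        (cylinder_isPreconnected hc hs hmono hScomp hSconn hSne i)
  have hproper : ∀ S : Set X, S ⊆ N → S ≠ N →
      M ∩ (fun x : ℕ → X => x i) ⁻¹' S ≠ M := by
    intro S hSN hSne heq
    apply hSne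
    refine Set.Subset.antisymm hSN ?_
    rintro y ⟨m, hmM, rfl⟩
    have : m ∈ M ∩ (fun x : ℕ → X => x i) ⁻¹' S := by rw [heq]; exact hmM
    exact this.2
  obtain ⟨hHcomp, hHne', hHconn⟩ := hHsub
  obtain ⟨hKcomp, hKne', hKconn⟩ := hKsub
  refine ⟨M ∩ (fun x : ℕ → X => x i) ⁻¹' H, M ∩ (fun x : ℕ → X => x i) ⁻¹' K,
    hpull H ⟨hHcomp, hHne', hHconn⟩ hHN, hpull K ⟨hKcomp, hKne', hKconn⟩ hKN,
    Set.inter_subset_left, Set.inter_subset_left,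
    hproper H hHN hHne, hproper K hKN hKne, ?_⟩
  apply Set.Subset.antisymm
  · rintro x (⟨hxM, -⟩ | ⟨hxM, -⟩) <;> exact hxM
  · intro x hxM
    have : x i ∈ H ∪ K := hunion.symm ▸ (Set.mem_image_of_mem _ hxM : x i ∈ N)
    rcases this with h | h
    · exact Or.inl ⟨hxM, h⟩
    · exact Or.inr ⟨hxM, h⟩
end

section
/- If X is a hereditarily unicoherent continuum and f : X → X is a continuous monotone map, then the restriction of f to any subcontinuum of X is also monotone (as a map onto its image). -/
/-- If `X` is a hereditarily unicoherent continuum and `f : X → X` is a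
continuous monotone map, then the restriction of `f` to any subcontinuum is
monotone: the fibre of the restriction over any point, `K ∩ f⁻¹(y)`, is
connected whenever nonempty. -/
theorem restriction_monotone {X : Type*} [MetricSpace X] [CompactSpace X]
    [ConnectedSpace X] (f : X → X) (hc : Continuous f)
    (hmono : ∀ x : X, IsPreconnected (f ⁻¹' {x}))
    (hhu : ∀ H K : Set X, IsSubcontinuum H → IsSubcontinuum K →
      IsPreconnected (H ∩ K)) :
    ∀ K : Set X, IsSubcontinuum K → ∀ y : X,
      IsPreconnected (K ∩ f ⁻¹' {y}) := by
  intro K hK y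
  rcases Set.eq_empty_or_nonempty (f ⁻¹' {y}) with he | hne
  · simpa [he] using isPreconnected_empty
  · exact hhu K (f ⁻¹' {y}) hK
      ⟨(isClosed_singleton.preimage hc).isCompact, hne, hmono y⟩
end

section
/- If X is a hereditarily unicoherent continuum and f : X → X is a continuous surjection, then the inverse limit lim←(X, f) is hereditarily unicoherent. -/
open Set

/-- The intersection of a decreasing sequence of compact connected sets in a
Hausdorff space is preconnected. -/
lemma nested_inter_preconnected {Y : Type*} [TopologicalSpace Y] [T2Space Y]
    (K : ℕ → Set Y) (hmono : ∀ n, K (n + 1) ⊆ K n)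
    (hcpt : ∀ n, IsCompact (K n)) (hconn : ∀ n, IsPreconnected (K n)) :
    IsPreconnected (⋂ n, K n) := by
  have hcl : ∀ n, IsClosed (K n) := fun n => (hcpt n).isClosed
  have hanti : Antitone K := antitone_nat_of_succ_le hmono
  have hCclosed : IsClosed (⋂ n, K n) := isClosed_iInter hcl
  have hCsub : ∀ n, (⋂ m, K m) ⊆ K n := fun n => iInter_subset K n
  have hCcpt : IsCompact (⋂ m, K m) := (hcpt 0).of_isClosed_subset hCclosed (hCsub 0)
  rw [isPreconnected_iff_subset_of_fully_disjoint_closed hCclosed]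
  intro u v hu hv hcov hdisj
  have hA : IsCompact ((⋂ m, K m) ∩ u) := hCcpt.inter_right hu
  have hB : IsCompact ((⋂ m, K m) ∩ v) := hCcpt.inter_right hv
  have hABdisj : Disjoint ((⋂ m, K m) ∩ u) ((⋂ m, K m) ∩ v) :=
    Disjoint.mono inter_subset_right inter_subset_right hdisj
  obtain ⟨U, V, hUo, hVo, hAU, hBV, hUV⟩ :=
    SeparatedNhds.of_isCompact_isCompact hA hB hABdisj
  have hCUV : (⋂ m, K m) ⊆ U ∪ V := by
    intro x hx
    rcases hcov hx with hxu | hxv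
    · exact Or.inl (hAU ⟨hx, hxu⟩)
    · exact Or.inr (hBV ⟨hx, hxv⟩)
  -- some K n is contained in U ∪ V
  have hexist : ∃ n, K n ⊆ U ∪ V := by
    by_contra hcon
    push_neg at hcon
    have hne : ∀ n, (K n \ (U ∪ V)).Nonempty := by
      intro n
      rcases not_subset.mp (hcon n) with ⟨x, hxK, hxUV⟩
      exact ⟨x, hxK, hxUV⟩
    have hdir : Directed (· ⊇ ·) (fun n => K n \ (U ∪ V)) := by
      intro m n
      refine ⟨max m n, ?_, ?_⟩ <;>
        exact diff_subset_diff (hanti (by simp)) (subset_refl _)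
    have hiInt : (⋂ n, K n \ (U ∪ V)).Nonempty :=
      IsCompact.nonempty_iInter_of_directed_nonempty_isCompact_isClosed _ hdir hne
        (fun n => (hcpt n).diff (hUo.union hVo))
        (fun n => (hcl n).sdiff (hUo.union hVo))
    obtain ⟨x, hx⟩ := hiInt
    simp only [mem_iInter, mem_diff] at hx
    have hxC : x ∈ ⋂ m, K m := mem_iInter.mpr fun n => (hx n).1
    exact (hx 0).2 (hCUV hxC)
  obtain ⟨n, hn⟩ := hexist
  -- K n connected, contained in U ∪ V disjoint opens: all on one side
  have hside : K n ∩ U = ∅ ∨ K n ∩ V = ∅ := by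
    by_contra hcon
    push_neg at hcon
    obtain ⟨h1, h2⟩ := hcon
    obtain ⟨x, _, hxU, hxV⟩ := hconn n U V hUo hVo hn h1 h2
    exact hUV.ne_of_mem hxU hxV rfl
  rcases hside with h | h
  · -- K n ∩ U = ∅: C ∩ u = ∅ so C ⊆ v
    right
    intro x hx
    rcases hcov hx with hxu | hxv
    · exact absurd (⟨hCsub n hx, hAU ⟨hx, hxu⟩⟩ : x ∈ K n ∩ U)
        (eq_empty_iff_forall_notMem.mp h x)
    · exact hxv
  · left
    intro x hx
    rcases hcov hx with hxu | hxv
    · exact hxu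
    · exact absurd (⟨hCsub n hx, hBV ⟨hx, hxv⟩⟩ : x ∈ K n ∩ V)
        (eq_empty_iff_forall_notMem.mp h x)

/-- If `X` is a hereditarily unicoherent continuum and `f : X → X` is a
continuous surjection, then the inverse limit `lim← (X, f) ⊆ X^ℕ` is
hereditarily unicoherent: any two of its subcontinua have connected
intersection. -/
theorem invLim_hereditarily_unicoherent {X : Type*} [MetricSpace X]
    [CompactSpace X] [ConnectedSpace X] (f : X → X) (hc : Continuous f)
    (hs : Function.Surjective f)
    (hhu : ∀ H K : Set X, IsSubcontinuum H → IsSubcontinuum K →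
      IsPreconnected (H ∩ K)) :
    ∀ H K : Set (ℕ → X), H ⊆ {x : ℕ → X | ∀ i, f (x (i + 1)) = x i} →
      K ⊆ {x : ℕ → X | ∀ i, f (x (i + 1)) = x i} →
      IsSubcontinuum H → IsSubcontinuum K → IsPreconnected (H ∩ K) := by
  intro H K hHL hKL hH hK
  -- trivial case: empty intersection
  rcases eq_empty_or_nonempty (H ∩ K) with hHK | hHK
  · rw [hHK]; exact isPreconnected_empty
  obtain ⟨z, hzH, hzK⟩ := hHK
  -- projections
  set Hs : ℕ → Set X := fun i => (fun x : ℕ → X => x i) '' H with hHs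
  set Ks : ℕ → Set X := fun i => (fun x : ℕ → X => x i) '' K with hKs
  set C : ℕ → Set X := fun i => Hs i ∩ Ks i with hCdef
  have hHsub : ∀ i, IsSubcontinuum (Hs i) := fun i =>
    ⟨hH.1.image (continuous_apply i), hH.2.image _ (continuous_apply i).continuousOn⟩
  have hKsub : ∀ i, IsSubcontinuum (Ks i) := fun i =>
    ⟨hK.1.image (continuous_apply i), hK.2.image _ (continuous_apply i).continuousOn⟩
  have hCcpt : ∀ i, IsCompact (C i) := fun i =>
    (hHsub i).1.inter_right (hKsub i).1.isClosed
  have hCconn : ∀ i, IsPreconnected (C i) := fun i =>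
    hhu (Hs i) (Ks i) (hHsub i) (hKsub i)
  have hCne : ∀ i, (C i).Nonempty := fun i =>
    ⟨z i, ⟨z, hzH, rfl⟩, ⟨z, hzK, rfl⟩⟩
  -- f maps C (i+1) into C i
  have hfC : ∀ i, ∀ y ∈ C (i + 1), f y ∈ C i := by
    rintro i y ⟨⟨h, hhH, hhy⟩, ⟨k, hkK, hky⟩⟩
    simp only at hhy hky
    refine ⟨⟨h, hhH, ?_⟩, ⟨k, hkK, ?_⟩⟩
    · show h i = f y
      rw [← hhy, hHL hhH i]
    · show k i = f y
      rw [← hky, hKL hkK i]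
  -- the approximating sets
  set D : ℕ → Set (ℕ → X) :=
    fun n => {x | (∀ i < n, f (x (i + 1)) = x i) ∧ x n ∈ C n} with hDdef
  -- membership in D n forces x i ∈ C i for i ≤ n
  have hDmemC : ∀ n x, x ∈ D n → ∀ i ≤ n, x i ∈ C i := by
    intro n x hx
    have key : ∀ k, k ≤ n → x (n - k) ∈ C (n - k) := by
      intro k
      induction k with
      | zero => intro _; simpa using hx.2
      | succ m ih =>
        intro hm
        have hm' : m ≤ n := Nat.le_of_succ_le hm
        have h1 : x (n - m) ∈ C (n - m) := ih hm'
        have h2 : n - (m + 1) + 1 = n - m := by omega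
        have h3 : f (x (n - (m + 1) + 1)) = x (n - (m + 1)) :=
          hx.1 _ (by omega)
        rw [h2] at h3
        rw [← h3]
        have := hfC (n - (m + 1)) (x (n - m))
        rw [h2] at this
        exact this h1
    intro i hi
    have := key (n - i) (by omega)
    rwa [Nat.sub_sub_self hi] at this
  -- D is decreasing
  have hDmono : ∀ n, D (n + 1) ⊆ D n := by
    rintro n x ⟨hcomp, hcn⟩
    refine ⟨fun i hi => hcomp i (by omega), ?_⟩
    have : f (x (n + 1)) = x n := hcomp n (by omega)
    rw [← this]
    exact hfC n _ hcn
  -- D n is closed, hence compact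
  have hDclosed : ∀ n, IsClosed (D n) := by
    intro n
    have h1 : IsClosed {x : ℕ → X | ∀ i < n, f (x (i + 1)) = x i} := by
      have : {x : ℕ → X | ∀ i < n, f (x (i + 1)) = x i} =
          ⋂ i, ⋂ (_ : i < n), {x : ℕ → X | f (x (i + 1)) = x i} := by
        ext x; simp
      rw [this]
      exact isClosed_iInter fun i => isClosed_iInter fun _ =>
        isClosed_eq (hc.comp (continuous_apply (i + 1))) (continuous_apply i)
    have h2 : IsClosed {x : ℕ → X | x n ∈ C n} :=
      (hCcpt n).isClosed.preimage (continuous_apply n)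
    exact h1.inter h2
  have hDcpt : ∀ n, IsCompact (D n) := fun n => (hDclosed n).isCompact
  -- D n is preconnected: it is the image of a connected "tube"
  have hDconn : ∀ n, IsPreconnected (D n) := by
    intro n
    set Φ : (ℕ → X) → (ℕ → X) :=
      fun y i => if i ≤ n then f^[n - i] (y n) else y i with hΦ
    have hΦc : Continuous Φ := by
      apply continuous_pi
      intro i
      by_cases h : i ≤ n
      · simp only [hΦ, h, if_true]
        exact (hc.iterate (n - i)).comp (continuous_apply n)
      · simp only [hΦ, h, if_false]
        exact continuous_apply i
    set T : Set (ℕ → X) := (fun y : ℕ → X => y n) ⁻¹' (C n) with hT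
    have hTconn : IsPreconnected T := by
      have : T = univ.pi (Function.update (fun _ : ℕ => (univ : Set X)) n (C n)) := by
        ext y
        simp only [hT, mem_preimage, mem_univ_pi]
        constructor
        · intro hy i
          rcases eq_or_ne i n with rfl | hne
          · simpa using hy
          · simp [Function.update_of_ne hne]
        · intro hy
          have := hy n
          simpa using this
      rw [this]
      refine isPreconnected_univ_pi fun i => ?_
      rcases eq_or_ne i n with h | hne
      · rw [h, Function.update_self]; exact hCconn n
      · rw [Function.update_of_ne hne]; exact isPreconnected_univ
    -- iterates of f stay inside the C's
    have hiter : ∀ k (c : X), c ∈ C n → k ≤ n → f^[k] c ∈ C (n - k) := by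
      intro k
      induction k with
      | zero => intro c hcn _; simpa using hcn
      | succ m ih =>
        intro c hcn hm
        have h1 : f^[m] c ∈ C (n - m) := ih c hcn (Nat.le_of_succ_le hm)
        have h2 : n - m = n - (m + 1) + 1 := by omega
        rw [h2] at h1
        have := hfC (n - (m + 1)) _ h1
        rw [show f^[m + 1] c = f (f^[m] c) from Function.iterate_succ_apply' f m c]
        exact this
    have hDimg : D n = Φ '' T := by
      ext x
      constructor
      · rintro ⟨hcomp, hcn⟩
        refine ⟨x, hcn, ?_⟩
        funext i
        simp only [hΦ]
        by_cases h : i ≤ n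
        · simp only [h, if_true]
          -- show f^[n-i] (x n) = x i
          have key : ∀ k, k ≤ n → f^[k] (x n) = x (n - k) := by
            intro k
            induction k with
            | zero => intro _; simp
            | succ m ih =>
              intro hm
              have h1 : f^[m] (x n) = x (n - m) := ih (Nat.le_of_succ_le hm)
              have h2 : n - m = n - (m + 1) + 1 := by omega
              rw [Function.iterate_succ_apply', h1, h2]
              exact hcomp _ (by omega)
          have := key (n - i) (by omega)
          rwa [Nat.sub_sub_self h] at this
        · simp [h]
      · rintro ⟨y, hyT, rfl⟩
        constructor
        · intro i hi
          simp only [hΦ, Nat.succ_le_of_lt hi, if_true, Nat.le_of_lt hi]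
          rw [← Function.iterate_succ_apply' f (n - (i + 1)) (y n)]
          congr 1
          omega
        · simp only [hΦ, le_refl, if_true, Nat.sub_self]
          exact hyT
    rw [hDimg]
    exact hTconn.image Φ hΦc.continuousOn
  -- H ∩ K = ⋂ D n
  have hkey : H ∩ K = ⋂ n, D n := by
    apply Subset.antisymm
    · rintro x ⟨hxH, hxK⟩
      refine mem_iInter.mpr fun n => ⟨fun i _ => hHL hxH i, ?_⟩
      exact ⟨⟨x, hxH, rfl⟩, ⟨x, hxK, rfl⟩⟩
    · intro x hx
      simp only [mem_iInter] at hx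
      have hcomp : ∀ i, f (x (i + 1)) = x i := fun i =>
        (hx (i + 1)).1 i (by omega)
      have hxC : ∀ i, x i ∈ C i := fun i => (hx i).2
      -- show x ∈ H; symmetric for K
      have inH : ∀ (M : Set (ℕ → X)), M ⊆ {y : ℕ → X | ∀ i, f (y (i + 1)) = y i} →
          IsCompact M → (∀ i, x i ∈ (fun y : ℕ → X => y i) '' M) → x ∈ M := by
        intro M hML hMcpt hxM
        set G : ℕ → Set (ℕ → X) := fun j => M ∩ {h | h j = x j} with hG
        have hGne : ∀ j, (G j).Nonempty := by
          intro j
          obtain ⟨h, hhM, hhj⟩ := hxM j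
          exact ⟨h, hhM, hhj⟩
        have hGstep : ∀ j, G (j + 1) ⊆ G j := by
          rintro j y ⟨hyM, hyj⟩
          refine ⟨hyM, ?_⟩
          simp only [mem_setOf_eq] at hyj ⊢
          rw [← hML hyM j, hyj, hcomp j]
        have hGanti : Antitone G := antitone_nat_of_succ_le hGstep
        have hGdir : Directed (· ⊇ ·) G := by
          intro m k
          exact ⟨max m k, hGanti (le_max_left m k), hGanti (le_max_right m k)⟩
        have hGclosed : ∀ j, IsClosed (G j) :=
          fun j => hMcpt.isClosed.inter (isClosed_eq (continuous_apply j) continuous_const)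
        have hGcpt : ∀ j, IsCompact (G j) :=
          fun j => hMcpt.inter_right (isClosed_eq (continuous_apply j) continuous_const)
        obtain ⟨h, hh⟩ :=
          IsCompact.nonempty_iInter_of_directed_nonempty_isCompact_isClosed G hGdir
            hGne hGcpt hGclosed
        simp only [mem_iInter, hG, mem_inter_iff, mem_setOf_eq] at hh
        have : h = x := funext fun j => (hh j).2
        rw [← this]
        exact (hh 0).1
      constructor
      · exact inH H hHL hH.1 fun i => (hxC i).1
      · exact inH K hKL hK.1 fun i => (hxC i).2
  rw [hkey]
  exact nested_inter_preconnected D hDmono hDcpt hDconn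
end

section
/- Let G be a finite connected graph which is a tree, let 𝒢 be a finite open cover of a continuum X whose nerve is G, and let 𝒞 = {C₁, …, C_n} be a free chain in 𝒢. Then 𝒢 \ 𝒞 is the disjoint union of two subcollections 𝒢_a and 𝒢_b whose nerves are disjoint unions of trees, such that ⋃𝒢_a meets (among links of 𝒞) only C₁, ⋃𝒢_b meets only C_n, and the closures of ⋃𝒢_a and ⋃𝒢_b are disjoint. -/
open scoped Classical

/-- The nerve of a finite collection `𝒢` of subsets of `X`: the simple graph on
`𝒢` with an edge between distinct members iff they intersect. -/
def nerve {X : Type*} (𝒢 : Finset (Set X)) : SimpleGraph {g : Set X // g ∈ 𝒢} where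
  Adj a b := a ≠ b ∧ (a.1 ∩ b.1).Nonempty
  symm := by
    constructor
    intro a b hab
    exact ⟨hab.1.symm, Set.inter_comm a.1 b.1 ▸ hab.2⟩
  loopless := by
    constructor
    intro a h
    exact h.1 rfl

/-- The predicate `g` avoids all links of the chain. -/
def chainPred {X : Type*} (n : ℕ) (C : ℕ → Set X) (g : Set X) : Prop :=
  ∀ i < n, g ≠ C i

/-- The nerve restricted to members satisfying `P`. -/
def subNerve {X : Type*} (𝒢 : Finset (Set X)) (P : Set X → Prop) :
    SimpleGraph {g : Set X // g ∈ 𝒢} where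
  Adj a b := (nerve 𝒢).Adj a b ∧ P a.1 ∧ P b.1
  symm := ⟨fun a b h => ⟨h.1.symm, h.2.2, h.2.1⟩⟩
  loopless := ⟨fun a h => (nerve 𝒢).loopless.irrefl a h.1⟩

/-- The collection of members of `𝒢` off the chain which connect, within the
nerve off the chain, to a member meeting the last link. -/
noncomputable def sideB {X : Type*} (𝒢 : Finset (Set X)) (n : ℕ) (C : ℕ → Set X) : Finset (Set X) :=
  𝒢.filter fun g => chainPred n C g ∧ 2 ≤ n ∧ ∃ (hg : g ∈ 𝒢) (b : {g : Set X // g ∈ 𝒢}),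
    (b.1 ∩ C (n - 1)).Nonempty ∧ chainPred n C b.1 ∧
    (subNerve 𝒢 (chainPred n C)).Reachable ⟨g, hg⟩ b

lemma nerve_mono_isAcyclic {X : Type*} {𝒢 𝒢' : Finset (Set X)} (h : 𝒢' ⊆ 𝒢)
    (hA : (nerve 𝒢).IsAcyclic) : (nerve 𝒢').IsAcyclic := by
  intro v p hp
  let f : nerve 𝒢' →g nerve 𝒢 :=
    { toFun := fun a => ⟨a.1, h a.2⟩
      map_rel' := fun {a b} hab =>
        ⟨fun he => hab.1 (Subtype.ext (show a.1 = b.1 from congrArg (Subtype.val : {g : Set X // g ∈ 𝒢} → Set X) he)), hab.2⟩ }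
  have hinj : Function.Injective f := fun a b he =>
    Subtype.ext (show a.1 = b.1 from congrArg (Subtype.val : {g : Set X // g ∈ 𝒢} → Set X) he)
  exact hA (p.map f) ((SimpleGraph.Walk.map_isCycle_iff_of_injective hinj).mpr hp)

/-- If `𝒢` is a finite open cover of a continuum `X` whose nerve is a tree `G`,
and `𝒞 = {C 0, …, C (n-1)}` is a free chain in `𝒢`, then `𝒢 \ 𝒞` splits into
two disjoint subcollections `𝒢ₐ` and `𝒢_b` whose nerves are forests (disjoint
unions of trees), such that members of `𝒢ₐ` meet, among the links of `𝒞`, only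
`C 0`, members of `𝒢_b` meet only `C (n-1)`, and the closures of `⋃𝒢ₐ` and
`⋃𝒢_b` are disjoint. -/
theorem tree_cover_splits_off_free_chain {X : Type*} [MetricSpace X]
    [CompactSpace X] [ConnectedSpace X]
    {V : Type*} [Fintype V] (G : SimpleGraph V) (hG : G.IsTree)
    (𝒢 : Finset (Set X))
    (hopen : ∀ g ∈ 𝒢, IsOpen g) (hcover : ⋃₀ (𝒢 : Set (Set X)) = Set.univ)
    (hnerve : Nonempty (nerve 𝒢 ≃g G))
    -- the free chain `C 0, …, C (n-1)` in `𝒢`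
    (n : ℕ) (hn : 1 ≤ n) (C : ℕ → Set X)
    (hmem : ∀ i < n, C i ∈ 𝒢)
    (hinj : ∀ i j, i < n → j < n → C i = C j → i = j)
    (hlink : ∀ i, i + 1 < n → (C i ∩ C (i + 1)).Nonempty)
    (hchain : ∀ i j, i < n → j < n →
      (closure (C i) ∩ closure (C j)).Nonempty → i ≤ j + 1 ∧ j ≤ i + 1)
    (hfree : ∀ i, 0 < i → i + 1 < n → ∀ g ∈ 𝒢, g ≠ C i →
      (closure g ∩ closure (C i)).Nonempty → g = C (i - 1) ∨ g = C (i + 1)) :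
    ∃ Ga Gb : Finset (Set X),
      Disjoint Ga Gb ∧
      Ga ∪ Gb = 𝒢.filter (fun g => ∀ i < n, g ≠ C i) ∧
      (nerve Ga).IsAcyclic ∧ (nerve Gb).IsAcyclic ∧
      (∀ g ∈ Ga, ∀ i < n, (g ∩ C i).Nonempty → i = 0) ∧
      (∀ g ∈ Gb, ∀ i < n, (g ∩ C i).Nonempty → i = n - 1) ∧
      Disjoint (closure (⋃₀ (Ga : Set (Set X))))
        (closure (⋃₀ (Gb : Set (Set X)))) := by
  obtain ⟨e⟩ := hnerve
  -- the nerve of 𝒢 is acyclic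
  have TA : (nerve 𝒢).IsAcyclic := by
    intro v p hp
    exact hG.2 (p.map e.toHom)
      ((SimpleGraph.Walk.map_isCycle_iff_of_injective e.toEmbedding.injective).mpr hp)
  set Gb : Finset (Set X) := sideB 𝒢 n C with hGb
  set Ga : Finset (Set X) := 𝒢.filter (fun g => chainPred n C g ∧ g ∉ Gb) with hGa
  have hGbsub : Gb ⊆ 𝒢 := Finset.filter_subset _ _
  have hGasub : Ga ⊆ 𝒢 := Finset.filter_subset _ _
  have hGbmem : ∀ g, g ∈ Gb ↔ g ∈ 𝒢 ∧ chainPred n C g ∧ 2 ≤ n ∧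
      ∃ (hg : g ∈ 𝒢) (b : {g : Set X // g ∈ 𝒢}),
      (b.1 ∩ C (n - 1)).Nonempty ∧ chainPred n C b.1 ∧
      (subNerve 𝒢 (chainPred n C)).Reachable ⟨g, hg⟩ b := by
    intro g; rw [hGb, sideB, Finset.mem_filter]
  -- only the end links may be met by sets off the chain
  have L0 : ∀ g ∈ 𝒢, chainPred n C g → ∀ i < n, (g ∩ C i).Nonempty →
      i = 0 ∨ i = n - 1 := by
    intro g hg hpred i hi hne
    by_contra hcon
    push_neg at hcon
    have h0 : 0 < i := by omega
    have h1 : i + 1 < n := by omega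
    obtain ⟨x, hx1, hx2⟩ := hne
    have := hfree i h0 h1 g hg (hpred i hi)
      ⟨x, subset_closure hx1, subset_closure hx2⟩
    rcases this with h | h
    · exact hpred (i - 1) (by omega) h
    · exact hpred (i + 1) (by omega) h
  -- the key separation lemma
  have L1 : 2 ≤ n → ∀ (a b : {g : Set X // g ∈ 𝒢}),
      chainPred n C a.1 → chainPred n C b.1 →
      (a.1 ∩ C 0).Nonempty → (b.1 ∩ C (n - 1)).Nonempty →
      (subNerve 𝒢 (chainPred n C)).Reachable a b → False := by
    intro hn2 a b ha hb ha0 hb1 hreach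
    have h1 : n - 1 < n := by omega
    set c : ℕ → {g : Set X // g ∈ 𝒢} :=
      fun i => if h : i < n then ⟨C i, hmem i h⟩ else ⟨C 0, hmem 0 hn⟩ with hc
    have hcv : ∀ i, i < n → (c i).1 = C i := by
      intro i h; simp [hc, dif_pos h]
    have hcinj : ∀ i j, i < n → j < n → c i = c j → i = j := by
      intro i j hi hj hij
      exact hinj i j hi hj (by rw [← hcv i hi, ← hcv j hj, hij])
    have hadj : ∀ i, i + 1 < n → (nerve 𝒢).Adj (c i) (c (i + 1)) := by
      intro i h
      refine ⟨fun hh => ?_, ?_⟩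
      · have := hcinj i (i + 1) (by omega) h hh; omega
      · rw [hcv i (by omega), hcv (i + 1) h]; exact hlink i h
    set D : SimpleGraph {g : Set X // g ∈ 𝒢} :=
      nerve 𝒢 \ SimpleGraph.fromEdgeSet {s(c (n - 2), c (n - 1))} with hD
    have hDadj : ∀ u v, (nerve 𝒢).Adj u v → u ≠ c (n - 1) → v ≠ c (n - 1) →
        D.Adj u v := by
      intro u v huv hu hv
      rw [hD, SimpleGraph.sdiff_adj]
      refine ⟨huv, ?_⟩
      rw [SimpleGraph.fromEdgeSet_adj]
      rintro ⟨he, -⟩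
      rw [Set.mem_singleton_iff] at he
      rcases Sym2.eq_iff.mp he with ⟨-, h2⟩ | ⟨h2, -⟩
      exacts [hv h2, hu h2]
    have hDadj' : ∀ u v, (nerve 𝒢).Adj u v → chainPred n C u.1 → D.Adj u v := by
      intro u v huv hu
      rw [hD, SimpleGraph.sdiff_adj]
      refine ⟨huv, ?_⟩
      rw [SimpleGraph.fromEdgeSet_adj]
      rintro ⟨he, -⟩
      rw [Set.mem_singleton_iff] at he
      rcases Sym2.eq_iff.mp he with ⟨h2, -⟩ | ⟨h2, -⟩
      · exact hu (n - 2) (by omega) (by rw [h2, hcv _ (by omega)])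
      · exact hu (n - 1) (by omega) (by rw [h2, hcv _ (by omega)])
    -- the chain connects c 0 to c (n-2) in D
    have creach : ∀ k, k < n - 1 → D.Reachable (c 0) (c k) := by
      intro k
      induction k with
      | zero => exact fun _ => SimpleGraph.Reachable.refl _
      | succ k ih =>
        intro h
        refine (ih (by omega)).trans (SimpleGraph.Adj.reachable ?_)
        refine hDadj (c k) (c (k + 1)) (hadj k (by omega)) ?_ ?_
        · intro hh; have := hcinj k (n - 1) (by omega) h1 hh; omega
        · intro hh; have := hcinj (k + 1) (n - 1) (by omega) h1 hh; omega
    -- the deleted edge is a bridge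
    have hadj' : (nerve 𝒢).Adj (c (n - 2)) (c (n - 1)) := by
      have h2 : n - 2 + 1 = n - 1 := by omega
      have := hadj (n - 2) (by omega)
      rwa [h2] at this
    have hbridge := (SimpleGraph.isAcyclic_iff_forall_adj_isBridge.mp TA) hadj'
    have hnr := SimpleGraph.isBridge_iff.mp hbridge
    apply hnr
    -- but c (n-2) and c (n-1) are connected in D through a and b
    have hle : subNerve 𝒢 (chainPred n C) ≤ D := by
      intro u v huv
      exact hDadj' u v huv.1 huv.2.1
    have ra : D.Reachable (c 0) a := by
      refine (SimpleGraph.Adj.reachable ?_).symm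
      refine hDadj' a (c 0) ⟨fun hh => ha 0 (by omega) (by rw [hh, hcv 0 (by omega)]), ?_⟩ ha
      rw [hcv 0 (by omega)]
      exact Set.inter_comm _ _ ▸ ha0
    have rb : D.Reachable b (c (n - 1)) := by
      refine SimpleGraph.Adj.reachable ?_
      refine hDadj' b (c (n - 1)) ⟨fun hh => hb (n - 1) h1 (by rw [hh, hcv _ h1]), ?_⟩ hb
      rw [hcv _ h1]
      exact hb1
    exact (creach (n - 2) (by omega)).symm.trans
      (ra.trans ((hreach.mono hle).trans rb))
  -- property 5: members of Ga meet only C 0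
  have P5 : ∀ g ∈ Ga, ∀ i < n, (g ∩ C i).Nonempty → i = 0 := by
    intro g hg i hi hne
    rw [hGa, Finset.mem_filter] at hg
    obtain ⟨hg𝒢, hpred, hnb⟩ := hg
    rcases L0 g hg𝒢 hpred i hi hne with h | h
    · exact h
    · by_contra hcon
      apply hnb
      rw [hGbmem]
      refine ⟨hg𝒢, hpred, by omega, hg𝒢, ⟨g, hg𝒢⟩, ?_, hpred,
        SimpleGraph.Reachable.refl _⟩
      rw [← h]; exact hne
  -- property 6: members of Gb meet only C (n-1)
  have P6 : ∀ g ∈ Gb, ∀ i < n, (g ∩ C i).Nonempty → i = n - 1 := by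
    intro g hg i hi hne
    rw [hGbmem] at hg
    obtain ⟨hg𝒢, hpred, hn2, hg𝒢', b, hb1, hbpred, hreach⟩ := hg
    rcases L0 g hg𝒢 hpred i hi hne with h | h
    · subst h
      exfalso
      exact L1 hn2 ⟨g, hg𝒢'⟩ b hpred hbpred hne hb1 hreach
    · exact h
  refine ⟨Ga, Gb, ?_, ?_, ?_, ?_, P5, P6, ?_⟩
  · -- disjoint
    rw [Finset.disjoint_left]
    intro g hga hgb
    rw [hGa, Finset.mem_filter] at hga
    exact hga.2.2 hgb
  · -- union
    ext g
    simp only [Finset.mem_union, hGa, Finset.mem_filter]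
    constructor
    · rintro (⟨hg, hp, -⟩ | hg)
      · exact ⟨hg, hp⟩
      · rw [hGbmem] at hg
        exact ⟨hg.1, fun i hi => hg.2.1 i hi⟩
    · rintro ⟨hg, hp⟩
      by_cases hb : g ∈ Gb
      · exact Or.inr hb
      · exact Or.inl ⟨hg, hp, hb⟩
  · exact nerve_mono_isAcyclic hGasub TA
  · exact nerve_mono_isAcyclic hGbsub TA
  · -- closures disjoint
    rw [Set.disjoint_left]
    intro x hxa hxb
    rw [(Ga.finite_toSet).closure_sUnion] at hxa
    rw [(Gb.finite_toSet).closure_sUnion] at hxb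
    simp only [Set.mem_iUnion] at hxa hxb
    obtain ⟨a, ha, hxa⟩ := hxa
    obtain ⟨b, hb, hxb⟩ := hxb
    rw [Finset.mem_coe] at ha hb
    have hx𝒢 : x ∈ ⋃₀ (𝒢 : Set (Set X)) := by rw [hcover]; trivial
    obtain ⟨g, hg𝒢, hxg⟩ := hx𝒢
    rw [Finset.mem_coe] at hg𝒢
    have hga : (g ∩ a).Nonempty := _root_.mem_closure_iff.mp hxa g (hopen g hg𝒢) hxg
    have hgb : (g ∩ b).Nonempty := _root_.mem_closure_iff.mp hxb g (hopen g hg𝒢) hxg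
    -- facts about a and b
    have ha' := ha
    rw [hGa, Finset.mem_filter] at ha'
    obtain ⟨ha𝒢, hapred, hanb⟩ := ha'
    have hb' := hb
    rw [hGbmem] at hb'
    obtain ⟨hb𝒢, hbpred, hn2, hb𝒢', b', hb'1, hb'pred, hb'reach⟩ := hb'
    by_cases hgc : chainPred n C g
    · -- g is off the chain: then a is reachable to b', so a ∈ Gb, contradiction
      apply hanb
      rw [hGbmem]
      have r1 : (subNerve 𝒢 (chainPred n C)).Reachable ⟨a, ha𝒢⟩ ⟨g, hg𝒢⟩ := by
        by_cases hag : a = g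
        · subst hag; exact SimpleGraph.Reachable.refl _
        · exact SimpleGraph.Adj.reachable
            (show (nerve 𝒢).Adj ⟨a, ha𝒢⟩ ⟨g, hg𝒢⟩ ∧ chainPred n C a ∧ chainPred n C g from ⟨⟨fun hh => hag (congrArg Subtype.val hh),
              Set.inter_comm _ _ ▸ hga⟩, hapred, hgc⟩)
      have r2 : (subNerve 𝒢 (chainPred n C)).Reachable ⟨g, hg𝒢⟩ ⟨b, hb𝒢⟩ := by
        by_cases hgb' : g = b
        · subst hgb'; exact SimpleGraph.Reachable.refl _
        · exact SimpleGraph.Adj.reachable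
            (show (nerve 𝒢).Adj ⟨g, hg𝒢⟩ ⟨b, hb𝒢⟩ ∧ chainPred n C g ∧ chainPred n C b from ⟨⟨fun hh => hgb' (congrArg Subtype.val hh), hgb⟩, hgc, hbpred⟩)
      have r3 : (subNerve 𝒢 (chainPred n C)).Reachable ⟨b, hb𝒢⟩ b' := by
        convert hb'reach
      exact ⟨ha𝒢, hapred, hn2, ha𝒢, b', hb'1, hb'pred, (r1.trans r2).trans r3⟩
    · -- g = C i for some i: then i = 0 and i = n - 1, contradiction
      rw [chainPred] at hgc
      push_neg at hgc
      obtain ⟨i, hi, hgi⟩ := hgc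
      have hia : (a ∩ C i).Nonempty := by
        obtain ⟨y, hy1, hy2⟩ := hga
        exact ⟨y, hy2, hgi ▸ hy1⟩
      have hib : (b ∩ C i).Nonempty := by
        obtain ⟨y, hy1, hy2⟩ := hgb
        exact ⟨y, hy2, hgi ▸ hy1⟩
      have h0 := P5 a ha i hi hia
      have h1 := P6 b hb i hi hib
      omega
end
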